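/- arXiv:0909.3127 — 8 statements merged into one kernel-verified Lean document; each statement's English description precedes it below -/
import Mathlib

section
/- For any two points p1, p2 in the unit square [0,1]^2, there exists an open axis-parallel rectangle contained in [0,1]^2 whose interior contains neither p1 nor p2 and whose area is at least (3 - √5)/2. -/
/-- Auxiliary: the case where the first point has `y`-coordinate below `(3-√5)/2`. -/
lemma aux_rect (x₁ y₁ x₂ y₂ : ℝ)
    (hx₁0 : 0 ≤ x₁) (hx₁1 : x₁ ≤ 1) (hy₁0 : 0 ≤ y₁)
    (hx₂0 : 0 ≤ x₂) (hx₂1 : x₂ ≤ 1)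
    (hy : y₁ < (3 - Real.sqrt 5) / 2) :
    ∃ a b c d : ℝ, 0 ≤ a ∧ a < b ∧ b ≤ 1 ∧ 0 ≤ c ∧ c < d ∧ d ≤ 1 ∧
      ¬ (a < x₁ ∧ x₁ < b ∧ c < y₁ ∧ y₁ < d) ∧
      ¬ (a < x₂ ∧ x₂ < b ∧ c < y₂ ∧ y₂ < d) ∧
      (3 - Real.sqrt 5) / 2 ≤ (b - a) * (d - c) := by
  have hs5 : (Real.sqrt 5) ^ 2 = 5 := Real.sq_sqrt (by norm_num)
  have hs0 : 0 ≤ Real.sqrt 5 := Real.sqrt_nonneg 5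
  have h2 : 2 < Real.sqrt 5 := by nlinarith
  have h3 : Real.sqrt 5 < 3 := by nlinarith
  set s := Real.sqrt 5 with hs
  by_cases hA : 1 - (3 - s) / 2 < x₂
  · -- rectangle (0, x₂) × (y₁, 1)
    refine ⟨0, x₂, y₁, 1, le_refl 0, by linarith, hx₂1, hy₁0, by linarith, le_refl 1,
      fun h => lt_irrefl y₁ h.2.2.1, fun h => lt_irrefl x₂ h.2.1, ?_⟩
    nlinarith [mul_nonneg (by linarith : (0:ℝ) ≤ x₂ - (s - 1) / 2)
      (by linarith : (0:ℝ) ≤ (1 - y₁) - (s - 1) / 2)]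
  · by_cases hB : x₂ < (3 - s) / 2
    · -- rectangle (x₂, 1) × (y₁, 1)
      refine ⟨x₂, 1, y₁, 1, hx₂0, by linarith, le_refl 1, hy₁0, by linarith, le_refl 1,
        fun h => lt_irrefl y₁ h.2.2.1, fun h => lt_irrefl x₂ h.1, ?_⟩
      nlinarith [mul_nonneg (by linarith : (0:ℝ) ≤ (1 - x₂) - (s - 1) / 2)
        (by linarith : (0:ℝ) ≤ (1 - y₁) - (s - 1) / 2)]
    · push_neg at hA hB
      by_cases hC : (3 - s) / 2 ≤ x₁
      · -- left strip (0, min x₁ x₂)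
        refine ⟨0, min x₁ x₂, 0, 1, le_refl 0, by
            have : (0:ℝ) < (3 - s) / 2 := by linarith
            exact lt_min (by linarith) (by linarith),
          min_le_of_left_le hx₁1, le_refl 0, one_pos, le_refl 1,
          fun h => absurd h.2.1 (not_lt.2 (min_le_left _ _)),
          fun h => absurd h.2.1 (not_lt.2 (min_le_right _ _)), ?_⟩
        have : (3 - s) / 2 ≤ min x₁ x₂ := le_min hC hB
        nlinarith
      · -- right strip (max x₁ x₂, 1)
        push_neg at hC
        refine ⟨max x₁ x₂, 1, 0, 1, le_trans hx₁0 (le_max_left _ _), ?_, le_refl 1,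
          le_refl 0, one_pos, le_refl 1,
          fun h => absurd h.1 (not_lt.2 (le_max_left _ _)),
          fun h => absurd h.1 (not_lt.2 (le_max_right _ _)), ?_⟩
        · have : max x₁ x₂ ≤ 1 - (3 - s) / 2 := max_le (by linarith) hA
          linarith
        · have : max x₁ x₂ ≤ 1 - (3 - s) / 2 := max_le (by linarith) hA
          nlinarith

/-- For any two points in the unit square, there is an open axis-parallel
rectangle inside the unit square avoiding both points, of area at least
`(3 - √5)/2`. -/
theorem stmt_0 (p₁ p₂ : ℝ × ℝ)
    (h₁ : p₁.1 ∈ Set.Icc (0:ℝ) 1 ∧ p₁.2 ∈ Set.Icc (0:ℝ) 1)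
    (h₂ : p₂.1 ∈ Set.Icc (0:ℝ) 1 ∧ p₂.2 ∈ Set.Icc (0:ℝ) 1) :
    ∃ a b c d : ℝ, 0 ≤ a ∧ a < b ∧ b ≤ 1 ∧ 0 ≤ c ∧ c < d ∧ d ≤ 1 ∧
      ¬ (a < p₁.1 ∧ p₁.1 < b ∧ c < p₁.2 ∧ p₁.2 < d) ∧
      ¬ (a < p₂.1 ∧ p₂.1 < b ∧ c < p₂.2 ∧ p₂.2 < d) ∧
      (3 - Real.sqrt 5) / 2 ≤ (b - a) * (d - c) := by
  obtain ⟨⟨hx₁0, hx₁1⟩, ⟨hy₁0, hy₁1⟩⟩ := h₁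
  obtain ⟨⟨hx₂0, hx₂1⟩, ⟨hy₂0, hy₂1⟩⟩ := h₂
  have hs5 : (Real.sqrt 5) ^ 2 = 5 := Real.sq_sqrt (by norm_num)
  have hs0 : 0 ≤ Real.sqrt 5 := Real.sqrt_nonneg 5
  have h2 : 2 < Real.sqrt 5 := by nlinarith
  have h3 : Real.sqrt 5 < 3 := by nlinarith
  set s := Real.sqrt 5 with hs
  by_cases hD : (3 - s) / 2 ≤ min p₁.2 p₂.2
  · -- bottom strip (0,1) × (0, min y₁ y₂)
    refine ⟨0, 1, 0, min p₁.2 p₂.2, le_refl 0, one_pos, le_refl 1, le_refl 0,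
      lt_of_lt_of_le (by linarith) hD, min_le_of_left_le hy₁1,
      fun h => absurd h.2.2.2 (not_lt.2 (min_le_left _ _)),
      fun h => absurd h.2.2.2 (not_lt.2 (min_le_right _ _)), ?_⟩
    nlinarith
  · push_neg at hD
    rcases min_lt_iff.1 hD with h | h
    · exact aux_rect p₁.1 p₁.2 p₂.1 p₂.2 hx₁0 hx₁1 hy₁0 hx₂0 hx₂1 h
    · obtain ⟨a, b, c, d, g1, g2, g3, g4, g5, g6, g7, g8, g9⟩ :=
        aux_rect p₂.1 p₂.2 p₁.1 p₁.2 hx₂0 hx₂1 hy₂0 hx₁0 hx₁1 h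
      exact ⟨a, b, c, d, g1, g2, g3, g4, g5, g6, g8, g7, g9⟩
end

section
/- For the four points (1/4, 1/2), (1/2, 1/4), (1/2, 3/4), (3/4, 1/2) in the unit square, every open axis-parallel rectangle contained in [0,1]^2 avoiding all four points has area at most 1/4. -/
/-- For the four points `(1/4,1/2), (1/2,1/4), (1/2,3/4), (3/4,1/2)`,
every open axis-parallel rectangle inside the unit square avoiding all four
points has area at most `1/4`. -/
theorem stmt_2 (a b c d : ℝ) (ha : 0 ≤ a) (hab : a < b) (hb : b ≤ 1)
    (hc : 0 ≤ c) (hcd : c < d) (hd : d ≤ 1)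
    (h : ∀ p : ℝ × ℝ,
      p ∈ ({(1/4, 1/2), (1/2, 1/4), (1/2, 3/4), (3/4, 1/2)} : Set (ℝ × ℝ)) →
      ¬ (a < p.1 ∧ p.1 < b ∧ c < p.2 ∧ p.2 < d)) :
    (b - a) * (d - c) ≤ 1 / 4 := by
  have h1 := h (1/4, 1/2) (by norm_num)
  have h2 := h (1/2, 1/4) (by norm_num)
  have h3 := h (1/2, 3/4) (by norm_num)
  have h4 := h (3/4, 1/2) (by norm_num)
  simp only [not_and_or, not_lt] at h1 h2 h3 h4
  have key : (b - a ≤ 1/2 ∧ d - c ≤ 1/2) ∨ b - a ≤ 1/4 ∨ d - c ≤ 1/4 := by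
    rcases le_or_gt b (1/2) with hB | hB
    · rcases h1 with x | x | x | x <;>
        first
          | (left; constructor <;> linarith)
          | (right; left; linarith)
          | (right; right; linarith)
    rcases le_or_gt (1/2) a with hA | hA
    · rcases h4 with x | x | x | x <;>
        first
          | (left; constructor <;> linarith)
          | (right; left; linarith)
          | (right; right; linarith)
    rcases le_or_gt d (1/2) with hD | hD
    · rcases h2 with x | x | x | x <;>
        first
          | (left; constructor <;> linarith)
          | (right; left; linarith)
          | (right; right; linarith)
    rcases le_or_gt (1/2) c with hC | hC
    · rcases h3 with x | x | x | x <;>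
        first
          | (left; constructor <;> linarith)
          | (right; left; linarith)
          | (right; right; linarith)
    have ka : 1/4 ≤ a := by rcases h1 with x | x | x | x <;> linarith
    have kb : b ≤ 3/4 := by rcases h4 with x | x | x | x <;> linarith
    have kc : 1/4 ≤ c := by rcases h2 with x | x | x | x <;> linarith
    have kd : d ≤ 3/4 := by rcases h3 with x | x | x | x <;> linarith
    left; constructor <;> linarith
  rcases key with ⟨k1, k2⟩ | k | k
  · nlinarith
  · nlinarith
  · nlinarith
end

section
/- For any set S of n points in the unit hypercube [0,1]^d with d ≥ 2, there exists an open axis-parallel box contained in [0,1]^d containing no point of S and having volume at least 1/(n+1). -/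
/-- Any `n` points in the unit hypercube `[0,1]^d`, `d ≥ 2`, admit an empty
open axis-parallel box of volume at least `1/(n+1)`. -/
theorem stmt_5 (d n : ℕ) (hd : 2 ≤ d) (S : Finset (Fin d → ℝ))
    (hcard : S.card = n) (hS : ∀ p ∈ S, ∀ i, p i ∈ Set.Icc (0:ℝ) 1) :
    ∃ a b : Fin d → ℝ, (∀ i, 0 ≤ a i ∧ a i < b i ∧ b i ≤ 1) ∧
      (∀ p ∈ S, ∃ i, ¬ (a i < p i ∧ p i < b i)) ∧
      1 / ((n : ℝ) + 1) ≤ ∏ i, (b i - a i) := by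
  have hd0 : 0 < d := by omega
  set i0 : Fin d := ⟨0, hd0⟩ with hi0
  have hn1 : (0:ℝ) < (n:ℝ) + 1 := by positivity
  -- pigeonhole
  set g : (Fin d → ℝ) → ℕ := fun p => min (Nat.floor (p i0 * ((n:ℝ)+1))) n with hg
  have hsub : S.image g ⊆ Finset.range (n+1) := by
    intro k hk
    simp only [Finset.mem_image] at hk
    obtain ⟨p, _, rfl⟩ := hk
    simp only [Finset.mem_range, Nat.lt_succ_iff, hg]
    exact min_le_right _ _
  have hcardlt : (S.image g).card < (Finset.range (n+1)).card := by
    calc (S.image g).card ≤ S.card := Finset.card_image_le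
    _ = n := hcard
    _ < (Finset.range (n+1)).card := by simp
  have hne : (Finset.range (n+1) \ S.image g).Nonempty := by
    rw [← Finset.card_pos]
    have := Finset.le_card_sdiff (S.image g) (Finset.range (n+1))
    omega
  obtain ⟨k, hk⟩ := hne
  rw [Finset.mem_sdiff] at hk
  obtain ⟨hkmem, hknot⟩ := hk
  have hkn : k ≤ n := by simpa [Nat.lt_succ_iff] using hkmem
  refine ⟨(fun i => if i = i0 then (k:ℝ)/((n:ℝ)+1) else 0),
          (fun i => if i = i0 then ((k:ℝ)+1)/((n:ℝ)+1) else 1), ?_, ?_, ?_⟩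
  · intro i
    by_cases h : i = i0 <;> simp [h]
    · refine ⟨by positivity, ?_, ?_⟩
      · rw [div_lt_div_iff₀ hn1 hn1]; nlinarith
      · rw [div_le_one hn1]
        have : (k:ℝ) ≤ n := by exact_mod_cast hkn
        linarith
  · intro p hp
    refine ⟨i0, ?_⟩
    rintro ⟨h1, h2⟩
    simp only [if_pos rfl, if_true] at h1 h2
    apply hknot
    rw [Finset.mem_image]
    refine ⟨p, hp, ?_⟩
    have hk1 : (k:ℝ) < p i0 * ((n:ℝ)+1) := by
      rwa [div_lt_iff₀ hn1] at h1
    have hk2 : p i0 * ((n:ℝ)+1) < (k:ℝ) + 1 := by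
      rwa [lt_div_iff₀ hn1] at h2
    have hfl : Nat.floor (p i0 * ((n:ℝ)+1)) = k := by
      have hp0 : (0:ℝ) ≤ p i0 := (hS p hp i0).1
      rw [Nat.floor_eq_iff (mul_nonneg hp0 hn1.le)]
      constructor
      · exact_mod_cast hk1.le
      · exact_mod_cast hk2
    simp [hg, hfl, hkn]
  · have : ∏ i, ((if i = i0 then ((k:ℝ)+1)/((n:ℝ)+1) else 1) -
        (if i = i0 then (k:ℝ)/((n:ℝ)+1) else 0)) = 1/((n:ℝ)+1) := by
      rw [Finset.prod_eq_single i0]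
      · simp only [eq_self_iff_true, if_true]; rw [← sub_div]; congr 1; ring
      · intro b _ hb; simp [hb]
      · simp
    rw [this]
end

section
/- For any set S of n points in the unit square [0,1]^2, there exists an open axis-parallel rectangle contained in [0,1]^2 containing no point of S and having area at least (5/4) · 1/(n+5). -/
open Finset


private lemma max_sum_rec (k : ℕ) :
    (∑ i ∈ Finset.range (k+2), max (i+1) (k+2-i))
      = (∑ i ∈ Finset.range k, max (i+1) (k-i)) + (3*k+4) := by
  rw [Finset.sum_range_succ']
  rw [Finset.sum_range_succ]
  have h1 : ∀ i ∈ Finset.range k, max (i+1+1) (k+2-(i+1)) = max (i+1) (k-i) + 1 := by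
    intro i hi
    rw [Finset.mem_range] at hi
    have h : k+2-(i+1) = (k-i)+1 := by omega
    rw [h]
    exact Nat.succ_max_succ _ _
  rw [Finset.sum_congr rfl h1]
  rw [Finset.sum_add_distrib, Finset.sum_const, Finset.card_range]
  have h2 : max (k+1+1) (k+2-(k+1)) = k+2 := by omega
  have h3 : max (0+1) (k+2-0) = k+2 := by omega
  simp only [smul_eq_mul, mul_one, h2, h3]
  omega

private lemma max_sum_le (k : ℕ) :
    4 * (∑ i ∈ Finset.range k, max (i+1) (k-i)) ≤ 3*k^2 + 2*k := by
  induction k using Nat.strong_induction_on with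
  | _ k ih =>
    match k, ih with
    | 0, _ => simp
    | 1, _ => simp
    | (m+2), ih =>
      have h1 := ih m (by omega)
      rw [max_sum_rec m]
      nlinarith [h1]



set_option maxHeartbeats 1000000 in
private lemma column_lemma (Y : Finset ℝ) (hne : Y.Nonempty)
    (hY : ∀ y ∈ Y, 0 ≤ y ∧ y ≤ 1) (δ : ℝ) (hδ : 0 < δ)
    (hdense : ∀ c d : ℝ, 0 ≤ c → d ≤ 1 → δ ≤ d - c → ∃ y ∈ Y, c < y ∧ y < d) :
    1/δ + 2 * ∑ y ∈ Y, |y - 1/2| ≤ 2 * (Y.card : ℝ) := by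
  classical
  have hk1 : 1 ≤ Y.card := Finset.card_pos.mpr hne
  have hhalf : ∀ y ∈ Y, |y - (1:ℝ)/2| ≤ 1/2 := by
    intro y hy
    rcases hY y hy with ⟨h0, h1⟩
    rw [abs_le]; constructor <;> linarith
  have hkR : (0:ℝ) < (Y.card:ℝ) := by exact_mod_cast hk1
  have hsumhalf : ∑ y ∈ Y, |y - (1:ℝ)/2| ≤ (Y.card:ℝ) * (1/2) := by
    calc ∑ y ∈ Y, |y - (1:ℝ)/2| ≤ ∑ _y ∈ Y, (1/2:ℝ) := Finset.sum_le_sum hhalf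
    _ = (Y.card:ℝ) * (1/2) := by rw [Finset.sum_const]; simp [nsmul_eq_mul]
  rcases le_or_gt (1/(Y.card:ℝ)) δ with hcase | hcase
  · -- easy case : δ ≥ 1/k
    have h1 : 1/δ ≤ (Y.card:ℝ) := by
      rw [div_le_iff₀ hδ]
      have := (div_le_iff₀ hkR).mp hcase
      linarith
    linarith
  · -- hard case : δ < 1/k
    set k := Y.card with hkdef
    have hδ1 : δ < 1 := lt_of_lt_of_le hcase (by rw [div_le_one hkR]; exact_mod_cast hk1)
    set e := Y.orderIsoOfFin hkdef.symm with he
    set yy : Fin k → ℝ := fun i => ((e i : Y) : ℝ) with hyy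
    have hmono : ∀ {i j : Fin k}, i ≤ j → yy i ≤ yy j := by
      intro i j hij
      have : e i ≤ e j := e.le_iff_le.mpr hij
      exact_mod_cast this
    have hmem : ∀ i, yy i ∈ Y := fun i => (e i).2
    have hsurj : ∀ z ∈ Y, ∃ i, yy i = z := by
      intro z hz
      obtain ⟨i, hi⟩ := e.surjective ⟨z, hz⟩
      exact ⟨i, by rw [hyy]; simp [hi]⟩
    have h01 : ∀ i, 0 ≤ yy i ∧ yy i ≤ 1 := fun i => hY _ (hmem i)
    have hkpos : 0 < k := hk1
    -- step 1 : yy i < (i+1) δ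
    have step1 : ∀ (i : ℕ) (h : i < k), yy ⟨i, h⟩ < ((i:ℝ)+1) * δ := by
      intro i
      induction i with
      | zero =>
        intro h
        by_contra hcon
        push_neg at hcon
        obtain ⟨z, hz, hz1, hz2⟩ := hdense 0 δ le_rfl hδ1.le (by linarith)
        obtain ⟨j, hj⟩ := hsurj z hz
        have hle : yy ⟨0, h⟩ ≤ yy j := hmono (by simp [Fin.le_def])
        rw [hj] at hle
        push_cast at hcon
        linarith
      | succ i ih =>
        intro h
        have hi : i < k := by omega
        have h1 := ih hi
        by_contra hcon
        push_neg at hcon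
        have hlen : δ ≤ yy ⟨i+1, h⟩ - yy ⟨i, hi⟩ := by
          push_cast at hcon ⊢
          linarith
        obtain ⟨z, hz, hz1, hz2⟩ := hdense (yy ⟨i, hi⟩) (yy ⟨i+1, h⟩) (h01 _).1 (h01 _).2 hlen
        obtain ⟨j, hj⟩ := hsurj z hz
        rcases le_or_gt j ⟨i, hi⟩ with hle | hlt
        · have := hmono hle
          rw [hj] at this
          linarith
        · have hle2 : (⟨i+1, h⟩ : Fin k) ≤ j := by
            rw [Fin.le_def]
            rw [Fin.lt_def] at hlt
            simpa using hlt
          have := hmono hle2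
          rw [hj] at this
          linarith
    -- step 2 : 1 - (j+1) δ < yy (k-1-j)
    have step2 : ∀ (j : ℕ) (h : j < k), 1 - ((j:ℝ)+1) * δ < yy ⟨k-1-j, by omega⟩ := by
      intro j
      induction j with
      | zero =>
        intro h
        by_contra hcon
        push_neg at hcon
        obtain ⟨z, hz, hz1, hz2⟩ := hdense (1-δ) 1 (by linarith) le_rfl (by linarith)
        obtain ⟨jj, hj⟩ := hsurj z hz
        have hle : yy jj ≤ yy ⟨k-1-0, by omega⟩ := by
          apply hmono
          rw [Fin.le_def]
          have := jj.isLt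
          simp
          omega
        rw [hj] at hle
        push_cast at hcon
        linarith
      | succ j ih =>
        intro h
        have hj' : j < k := by omega
        have h1 := ih hj'
        by_contra hcon
        push_neg at hcon
        have hlen : δ ≤ yy ⟨k-1-j, by omega⟩ - yy ⟨k-1-(j+1), by omega⟩ := by
          push_cast at hcon h1 ⊢
          linarith
        obtain ⟨z, hz, hz1, hz2⟩ := hdense (yy ⟨k-1-(j+1), by omega⟩) (yy ⟨k-1-j, by omega⟩)
          (h01 _).1 (h01 _).2 hlen
        obtain ⟨l, hl⟩ := hsurj z hz
        rcases le_or_gt l ⟨k-1-(j+1), by omega⟩ with hle | hlt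
        · have := hmono hle
          rw [hl] at this
          linarith
        · have hle2 : (⟨k-1-j, by omega⟩ : Fin k) ≤ l := by
            rw [Fin.le_def]
            rw [Fin.lt_def] at hlt
            simp at hlt ⊢
            omega
          have := hmono hle2
          rw [hl] at this
          linarith
    have hstep1' : ∀ i : Fin k, yy i < ((i.val:ℝ)+1) * δ := by
      intro i
      have := step1 i.val i.isLt
      simpa using this
    have hstep2' : ∀ i : Fin k, 1 - ((k:ℝ) - (i.val:ℝ)) * δ < yy i := by
      intro i
      have hlt : k-1-i.val < k := by omega
      have h2 := step2 (k-1-i.val) hlt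
      have hidx : (⟨k-1-(k-1-i.val), by omega⟩ : Fin k) = i := by
        apply Fin.ext
        simp
        omega
      rw [hidx] at h2
      have hcast : ((k-1-i.val : ℕ):ℝ) + 1 = (k:ℝ) - (i.val:ℝ) := by
        have h3 : (k-1-i.val) = k - (i.val+1) := by omega
        rw [h3, Nat.cast_sub (by omega)]
        push_cast
        ring
      rw [hcast] at h2
      exact h2
    -- pointwise bound on |y - 1/2|
    have habs : ∀ i : Fin k,
        |yy i - 1/2| ≤ δ * ((max (i.val+1) (k - i.val) : ℕ):ℝ) - 1/2 := by
      intro i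
      have h1 := hstep1' i
      have h2 := hstep2' i
      have hc1 : ((i.val+1:ℕ):ℝ) ≤ ((max (i.val+1) (k-i.val) : ℕ):ℝ) := by
        exact_mod_cast le_max_left _ _
      have hc2 : ((k-i.val:ℕ):ℝ) ≤ ((max (i.val+1) (k-i.val) : ℕ):ℝ) := by
        exact_mod_cast le_max_right _ _
      have hc3 : ((k-i.val:ℕ):ℝ) = (k:ℝ) - (i.val:ℝ) := by
        rw [Nat.cast_sub (le_of_lt i.isLt)]
      have hc1' : (i.val:ℝ) + 1 ≤ ((max (i.val+1) (k-i.val) : ℕ):ℝ) := by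
        exact_mod_cast le_max_left (i.val+1) (k-i.val)
      rcases le_or_gt (yy i) (1/2) with hy | hy
      · rw [abs_of_nonpos (by linarith)]
        have hm := mul_le_mul_of_nonneg_left hc2 hδ.le
        rw [hc3] at hm
        linarith
      · rw [abs_of_pos (by linarith)]
        have hm := mul_le_mul_of_nonneg_left hc1' hδ.le
        linarith
    -- convert sum over Y to sum over Fin k
    have hsum1 : ∑ y ∈ Y, |y - (1:ℝ)/2| = ∑ i : Fin k, |yy i - 1/2| := by
      rw [← Finset.sum_coe_sort Y (fun y => |y - (1:ℝ)/2|)]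
      exact (Equiv.sum_comp e.toEquiv (fun y : Y => |(y:ℝ) - 1/2|)).symm
    set MN : ℕ := ∑ i ∈ Finset.range k, max (i+1) (k-i) with hMN
    have hsum2 : ∑ i : Fin k, ((max (i.val+1) (k-i.val) : ℕ):ℝ) = (MN:ℝ) := by
      rw [hMN]
      rw [Nat.cast_sum]
      exact Fin.sum_univ_eq_sum_range (fun i => ((max (i+1) (k-i) : ℕ):ℝ)) k
    have hDle : ∑ y ∈ Y, |y - (1:ℝ)/2| ≤ δ * (MN:ℝ) - (k:ℝ)/2 := by
      rw [hsum1]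
      calc ∑ i : Fin k, |yy i - 1/2|
          ≤ ∑ i : Fin k, (δ * ((max (i.val+1) (k-i.val) : ℕ):ℝ) - 1/2) :=
            Finset.sum_le_sum (fun i _ => habs i)
        _ = δ * (MN:ℝ) - (k:ℝ)/2 := by
            rw [Finset.sum_sub_distrib, ← Finset.mul_sum, hsum2, Finset.sum_const]
            simp [Finset.card_univ]
            ring
    have hM4 : 4*(MN:ℝ) ≤ 3*(k:ℝ)^2 + 2*(k:ℝ) := by exact_mod_cast max_sum_le k
    have hδk : (k:ℝ)*δ < 1 := by
      rw [lt_div_iff₀ hkR] at hcase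
      linarith
    have hδk1 : 1 < ((k:ℝ)+1)*δ := by
      have ha := step1 (k-1) (by omega)
      have hb := step2 0 hkpos
      have hcast : ((k-1:ℕ):ℝ) + 1 = (k:ℝ) := by
        rw [Nat.cast_sub hk1]; push_cast; ring
      rw [hcast] at ha
      push_cast at hb
      -- hb : 1 - (0+1)*δ < yy ⟨k-1-0, _⟩ ; ha : yy ⟨k-1, _⟩ < k*δ
      have : (⟨k-1-0, by omega⟩ : Fin k) = ⟨k-1, by omega⟩ := by
        apply Fin.ext; simp
      rw [this] at hb
      nlinarith
    rcases Nat.lt_or_ge k 2 with hk2 | hk2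
    · -- k = 1
      have hk1' : k = 1 := by omega
      have hMN1 : (MN:ℝ) = 1 := by
        rw [hMN, hk1']
        norm_num
      have hkr1 : (k:ℝ) = 1 := by exact_mod_cast hk1'
      rw [hkr1] at hδk hDle ⊢
      rw [hMN1] at hDle
      have hhalfδ : 1/2 < δ := by
        rw [hkr1] at hδk1; nlinarith
      have hd : 1/δ ≤ 3 - 2*δ := by
        rw [div_le_iff₀ hδ]
        nlinarith
      linarith
    · -- k ≥ 2
      have hk2R : (2:ℝ) ≤ (k:ℝ) := by exact_mod_cast hk2
      have hMN0 : (0:ℝ) ≤ (MN:ℝ) := Nat.cast_nonneg _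
      have hP : 0 ≤ (((k:ℝ)+1)*δ - 1) * (1 - (k:ℝ)*δ) :=
        mul_nonneg (by linarith) (by linarith)
      have hgoal : 1/δ ≤ 3*(k:ℝ) - 2*δ*(MN:ℝ) := by
        rw [div_le_iff₀ hδ]
        nlinarith [hP, mul_le_mul_of_nonneg_right hM4 (sq_nonneg δ), hδ.le, sq_nonneg δ,
          mul_pos hδ hδ, hk2R, hδk, hδk1]
      linarith


noncomputable def rnb (X : Finset ℝ) (ξ : ℝ) : ℝ :=
  (insert (1:ℝ) (X.filter (fun x => ξ < x))).min' (Finset.insert_nonempty _ _)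

noncomputable def lnb (X : Finset ℝ) (ξ : ℝ) : ℝ :=
  (insert (0:ℝ) (X.filter (fun x => x < ξ))).max' (Finset.insert_nonempty _ _)

private lemma lnb_nonneg (X : Finset ℝ) (ξ : ℝ) : 0 ≤ lnb X ξ :=
  Finset.le_max' _ _ (Finset.mem_insert_self _ _)

private lemma rnb_le_one (X : Finset ℝ) (ξ : ℝ) (hX : ∀ x ∈ X, x ≤ 1) : rnb X ξ ≤ 1 := by
  unfold rnb
  apply Finset.min'_le _ _ (Finset.mem_insert_self _ _)

private lemma lnb_le (X : Finset ℝ) (ξ : ℝ) (hξ : 0 ≤ ξ) : lnb X ξ ≤ ξ := by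
  unfold lnb
  apply Finset.max'_le
  intro y hy
  rcases Finset.mem_insert.mp hy with h | h
  · rw [h]; exact hξ
  · exact (Finset.mem_filter.mp h).2.le

private lemma le_rnb (X : Finset ℝ) (ξ : ℝ) (hξ : ξ ≤ 1) : ξ ≤ rnb X ξ := by
  unfold rnb
  apply Finset.le_min'
  intro y hy
  rcases Finset.mem_insert.mp hy with h | h
  · rw [h]; exact hξ
  · exact (Finset.mem_filter.mp h).2.le

private lemma lnb_lt_rnb (X : Finset ℝ) (ξ : ℝ) (hξ0 : 0 ≤ ξ) (hξ1 : ξ ≤ 1) :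
    lnb X ξ < rnb X ξ := by
  rcases lt_or_ge ξ 1 with h | h
  · have h2 : ξ < rnb X ξ := by
      unfold rnb
      rw [Finset.lt_min'_iff]
      intro y hy
      rcases Finset.mem_insert.mp hy with hh | hh
      · rw [hh]; exact h
      · exact (Finset.mem_filter.mp hh).2
    exact lt_of_le_of_lt (lnb_le X ξ hξ0) h2
  · have hξe : ξ = 1 := le_antisymm hξ1 h
    have h2 : lnb X ξ < ξ := by
      unfold lnb
      rw [Finset.max'_lt_iff]
      intro y hy
      rcases Finset.mem_insert.mp hy with hh | hh
      · rw [hh, hξe]; norm_num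
      · exact (Finset.mem_filter.mp hh).2
    exact lt_of_lt_of_le h2 (le_rnb X ξ hξ1)

private lemma between_eq (X : Finset ℝ) (ξ x : ℝ) (hx : x ∈ X)
    (h1 : lnb X ξ < x) (h2 : x < rnb X ξ) : x = ξ := by
  rcases lt_trichotomy x ξ with h | h | h
  · exfalso
    have hxm : x ∈ insert (0:ℝ) (X.filter (fun z => z < ξ)) :=
      Finset.mem_insert_of_mem (Finset.mem_filter.mpr ⟨hx, h⟩)
    have := Finset.le_max' _ x hxm
    unfold lnb at h1
    linarith
  · exact h
  · exfalso
    have hxm : x ∈ insert (1:ℝ) (X.filter (fun z => ξ < z)) :=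
      Finset.mem_insert_of_mem (Finset.mem_filter.mpr ⟨hx, h⟩)
    have := Finset.min'_le _ x hxm
    unfold rnb at h2
    linarith

private lemma sumR : ∀ (m : ℕ) (X : Finset ℝ), X.card = m → ∀ (hne : X.Nonempty),
    (∀ x ∈ X, x ≤ 1) → ∑ ξ ∈ X, (rnb X ξ - ξ) = 1 - X.min' hne := by
  intro m
  induction m using Nat.strong_induction_on with
  | _ m ih =>
    intro X hcard hne hbd
    have hm : 0 < m := hcard ▸ Finset.card_pos.mpr hne
    set a := X.min' hne with ha
    have haX : a ∈ X := X.min'_mem hne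
    rcases (X.erase a).eq_empty_or_nonempty with hemp | hne'
    · have hXa : X = {a} := by
        apply Finset.eq_singleton_iff_unique_mem.mpr
        refine ⟨haX, fun x hx => ?_⟩
        by_contra hne2
        have : x ∈ X.erase a := Finset.mem_erase.mpr ⟨hne2, hx⟩
        rw [hemp] at this
        exact absurd this (Finset.notMem_empty x)
      rw [hXa, Finset.sum_singleton]
      have hfe : ({a} : Finset ℝ).filter (fun x => a < x) = ∅ := by
        apply Finset.filter_eq_empty_iff.mpr
        intro x hx
        rw [Finset.mem_singleton] at hx
        rw [hx]
        exact lt_irrefl a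
      have : rnb {a} a = 1 := by
        unfold rnb
        simp only [hfe]
        simp
      rw [this]
    · -- X has at least two elements
      have hkey : X.filter (fun x => a < x) = X.erase a := by
        ext x
        rw [Finset.mem_filter, Finset.mem_erase]
        constructor
        · rintro ⟨hx, hax⟩
          exact ⟨ne_of_gt hax, hx⟩
        · rintro ⟨hxa, hx⟩
          exact ⟨hx, lt_of_le_of_ne (X.min'_le x hx) (Ne.symm hxa)⟩
      have hrnb_a : rnb X a = (X.erase a).min' hne' := by
        unfold rnb
        simp only [hkey]
        rw [Finset.min'_insert (H := hne')]
        apply min_eq_right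
        have := (X.erase a).min'_mem hne'
        exact hbd _ (Finset.mem_of_mem_erase this)
      have hfilter_eq : ∀ ξ ∈ X.erase a, rnb X ξ = rnb (X.erase a) ξ := by
        intro ξ hξ
        unfold rnb
        have heq : (X.erase a).filter (fun x => ξ < x) = X.filter (fun x => ξ < x) := by
          rw [Finset.filter_erase]
          apply Finset.erase_eq_of_notMem
          rw [Finset.mem_filter]
          rintro ⟨-, hlt⟩
          have := X.min'_le ξ (Finset.mem_of_mem_erase hξ)
          rw [← ha] at this
          linarith
        simp only [← heq]
      have hsum : ∑ ξ ∈ X, (rnb X ξ - ξ)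
          = (rnb X a - a) + ∑ ξ ∈ X.erase a, (rnb X ξ - ξ) :=
        (Finset.add_sum_erase X _ haX).symm
      have hsum' : ∑ ξ ∈ X.erase a, (rnb X ξ - ξ)
          = ∑ ξ ∈ X.erase a, (rnb (X.erase a) ξ - ξ) :=
        Finset.sum_congr rfl (fun ξ hξ => by rw [hfilter_eq ξ hξ])
      have hcard' : (X.erase a).card = m - 1 := by
        rw [Finset.card_erase_of_mem haX, hcard]
      have hihm := ih (m-1) (by omega) (X.erase a) hcard' hne'
        (fun x hx => hbd x (Finset.mem_of_mem_erase hx))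
      rw [hsum, hsum', hihm, hrnb_a]
      ring

private lemma sumL : ∀ (m : ℕ) (X : Finset ℝ), X.card = m → ∀ (hne : X.Nonempty),
    (∀ x ∈ X, 0 ≤ x) → ∑ ξ ∈ X, (ξ - lnb X ξ) = X.max' hne := by
  intro m
  induction m using Nat.strong_induction_on with
  | _ m ih =>
    intro X hcard hne hbd
    have hm : 0 < m := hcard ▸ Finset.card_pos.mpr hne
    set a := X.max' hne with ha
    have haX : a ∈ X := X.max'_mem hne
    rcases (X.erase a).eq_empty_or_nonempty with hemp | hne'
    · have hXa : X = {a} := by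
        apply Finset.eq_singleton_iff_unique_mem.mpr
        refine ⟨haX, fun x hx => ?_⟩
        by_contra hne2
        have : x ∈ X.erase a := Finset.mem_erase.mpr ⟨hne2, hx⟩
        rw [hemp] at this
        exact absurd this (Finset.notMem_empty x)
      rw [hXa, Finset.sum_singleton]
      have hfe : ({a} : Finset ℝ).filter (fun x => x < a) = ∅ := by
        apply Finset.filter_eq_empty_iff.mpr
        intro x hx
        rw [Finset.mem_singleton] at hx
        rw [hx]
        exact lt_irrefl a
      have : lnb {a} a = 0 := by
        unfold lnb
        simp only [hfe]
        simp
      rw [this]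
      simp
    · have hkey : X.filter (fun x => x < a) = X.erase a := by
        ext x
        rw [Finset.mem_filter, Finset.mem_erase]
        constructor
        · rintro ⟨hx, hax⟩
          exact ⟨ne_of_lt hax, hx⟩
        · rintro ⟨hxa, hx⟩
          exact ⟨hx, lt_of_le_of_ne (X.le_max' x hx) hxa⟩
      have hlnb_a : lnb X a = (X.erase a).max' hne' := by
        unfold lnb
        simp only [hkey]
        rw [Finset.max'_insert (H := hne')]
        apply max_eq_right
        have := (X.erase a).max'_mem hne'
        exact hbd _ (Finset.mem_of_mem_erase this)
      have hfilter_eq : ∀ ξ ∈ X.erase a, lnb X ξ = lnb (X.erase a) ξ := by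
        intro ξ hξ
        unfold lnb
        have heq : (X.erase a).filter (fun x => x < ξ) = X.filter (fun x => x < ξ) := by
          rw [Finset.filter_erase]
          apply Finset.erase_eq_of_notMem
          rw [Finset.mem_filter]
          rintro ⟨-, hlt⟩
          have := X.le_max' ξ (Finset.mem_of_mem_erase hξ)
          rw [← ha] at this
          linarith
        simp only [← heq]
      have hsum : ∑ ξ ∈ X, (ξ - lnb X ξ)
          = (a - lnb X a) + ∑ ξ ∈ X.erase a, (ξ - lnb X ξ) :=
        (Finset.add_sum_erase X _ haX).symm
      have hsum' : ∑ ξ ∈ X.erase a, (ξ - lnb X ξ)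
          = ∑ ξ ∈ X.erase a, (ξ - lnb (X.erase a) ξ) :=
        Finset.sum_congr rfl (fun ξ hξ => by rw [hfilter_eq ξ hξ])
      have hcard' : (X.erase a).card = m - 1 := by
        rw [Finset.card_erase_of_mem haX, hcard]
      have hihm := ih (m-1) (by omega) (X.erase a) hcard' hne'
        (fun x hx => hbd x (Finset.mem_of_mem_erase hx))
      rw [hsum, hsum', hihm, hlnb_a]
      ring


set_option maxHeartbeats 1000000 in
private lemma density_sum (S : Finset (ℝ×ℝ)) (T : ℝ) (hT : 0 < T)
    (hHit : ∀ c d : ℝ, 0 ≤ c → c < d → d ≤ 1 → T ≤ d - c → ∃ p ∈ S, c < p.2 ∧ p.2 < d) :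
    1/(4*T) - 3/2 ≤ ∑ p ∈ S, |p.2 - 1/2| := by
  classical
  have hD0 : (0:ℝ) ≤ ∑ p ∈ S, |p.2 - 1/2| := Finset.sum_nonneg (fun p _ => abs_nonneg _)
  rcases lt_or_ge (1/(2*T)) 2 with hs | hs
  · have h4 : 1/(4*T) < 1 := by
      rw [div_lt_one (by positivity)]
      rw [div_lt_iff₀ (by positivity)] at hs
      linarith
    linarith
  · -- upper family
    have hup : ∀ k : ℕ, (k:ℝ)*T ≤ 1/2 →
        ∃ F : Finset (ℝ×ℝ), F ⊆ S ∧ F.card = k ∧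
          (∀ p ∈ F, 1/2 < p.2 ∧ p.2 < 1/2 + (k:ℝ)*T) ∧
          T*((k:ℝ)*((k:ℝ)-1))/2 ≤ ∑ p ∈ F, (p.2 - 1/2) := by
      intro k
      induction k with
      | zero =>
        intro _
        exact ⟨∅, Finset.empty_subset _, rfl, by simp, by simp⟩
      | succ k ih =>
        intro hk
        push_cast at hk
        have hk' : (k:ℝ)*T ≤ 1/2 := by nlinarith
        obtain ⟨F, hFS, hFcard, hFmem, hFsum⟩ := ih hk'
        have hkTnn : (0:ℝ) ≤ (k:ℝ)*T := by positivity
        have hc0 : (0:ℝ) ≤ 1/2 + (k:ℝ)*T := by positivity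
        have hcd : (1:ℝ)/2 + (k:ℝ)*T < 1/2 + ((k:ℝ)+1)*T := by nlinarith
        have hd1 : 1/2 + ((k:ℝ)+1)*T ≤ 1 := by linarith
        obtain ⟨q, hqS, hq1, hq2⟩ := hHit (1/2 + (k:ℝ)*T) (1/2 + ((k:ℝ)+1)*T) hc0 hcd hd1
          (le_of_eq (by ring))
        have hqF : q ∉ F := by
          intro h
          have := (hFmem q h).2
          linarith
        refine ⟨insert q F, Finset.insert_subset hqS hFS, ?_, ?_, ?_⟩
        · rw [Finset.card_insert_of_notMem hqF, hFcard]
        · intro p hp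
          rcases Finset.mem_insert.mp hp with h | h
          · subst h
            constructor
            · linarith
            · push_cast
              linarith
          · have := hFmem p h
            constructor
            · exact this.1
            · push_cast
              nlinarith [this.2, hT.le]
        · rw [Finset.sum_insert hqF]
          push_cast
          nlinarith [hFsum, hq1]
    -- lower family
    have hdn : ∀ k : ℕ, (k:ℝ)*T ≤ 1/2 →
        ∃ F : Finset (ℝ×ℝ), F ⊆ S ∧ F.card = k ∧
          (∀ p ∈ F, p.2 < 1/2 ∧ 1/2 - (k:ℝ)*T < p.2) ∧
          T*((k:ℝ)*((k:ℝ)-1))/2 ≤ ∑ p ∈ F, (1/2 - p.2) := by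
      intro k
      induction k with
      | zero =>
        intro _
        exact ⟨∅, Finset.empty_subset _, rfl, by simp, by simp⟩
      | succ k ih =>
        intro hk
        push_cast at hk
        have hk' : (k:ℝ)*T ≤ 1/2 := by nlinarith
        obtain ⟨F, hFS, hFcard, hFmem, hFsum⟩ := ih hk'
        have hkTnn : (0:ℝ) ≤ (k:ℝ)*T := by positivity
        have hc0 : (0:ℝ) ≤ 1/2 - ((k:ℝ)+1)*T := by linarith
        have hcd : (1:ℝ)/2 - ((k:ℝ)+1)*T < 1/2 - (k:ℝ)*T := by nlinarith
        have hd1 : 1/2 - (k:ℝ)*T ≤ 1 := by linarith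
        obtain ⟨q, hqS, hq1, hq2⟩ := hHit (1/2 - ((k:ℝ)+1)*T) (1/2 - (k:ℝ)*T) hc0 hcd hd1
          (le_of_eq (by ring))
        have hqF : q ∉ F := by
          intro h
          have := (hFmem q h).2
          linarith
        refine ⟨insert q F, Finset.insert_subset hqS hFS, ?_, ?_, ?_⟩
        · rw [Finset.card_insert_of_notMem hqF, hFcard]
        · intro p hp
          rcases Finset.mem_insert.mp hp with h | h
          · subst h
            constructor
            · linarith
            · push_cast
              linarith
          · have := hFmem p h
            constructor
            · exact this.1
            · push_cast
              nlinarith [this.2, hT.le]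
        · rw [Finset.sum_insert hqF]
          push_cast
          nlinarith [hFsum, hq2]
    set s : ℝ := 1/(2*T) with hsdef
    have hs0 : 0 < s := by positivity
    set K : ℕ := ⌊s⌋₊ with hKdef
    have hK1 : (K:ℝ) ≤ s := Nat.floor_le hs0.le
    have hK2 : s < (K:ℝ) + 1 := Nat.lt_floor_add_one s
    have hsT : s*T = 1/2 := by
      rw [hsdef]
      field_simp
    have hKT : (K:ℝ)*T ≤ 1/2 := by
      rw [← hsT]
      exact mul_le_mul_of_nonneg_right hK1 hT.le
    obtain ⟨F, hFS, hFcard, hFmem, hFsum⟩ := hup K hKT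
    obtain ⟨G, hGS, hGcard, hGmem, hGsum⟩ := hdn K hKT
    have hdisj : Disjoint F G := by
      rw [Finset.disjoint_left]
      intro p hpF hpG
      have := (hFmem p hpF).1
      have := (hGmem p hpG).1
      linarith
    have hsub : F ∪ G ⊆ S := Finset.union_subset hFS hGS
    have hchain : T*((K:ℝ)*((K:ℝ)-1)) ≤ ∑ p ∈ S, |p.2 - 1/2| := by
      have h1 : ∑ p ∈ F ∪ G, |p.2 - 1/2| ≤ ∑ p ∈ S, |p.2 - 1/2| :=
        Finset.sum_le_sum_of_subset_of_nonneg hsub (fun p _ _ => abs_nonneg _)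
      rw [Finset.sum_union hdisj] at h1
      have h2 : ∑ p ∈ F, (p.2 - 1/2) ≤ ∑ p ∈ F, |p.2 - 1/2| :=
        Finset.sum_le_sum (fun p _ => le_abs_self _)
      have h3 : ∑ p ∈ G, (1/2 - p.2) ≤ ∑ p ∈ G, |p.2 - 1/2| :=
        Finset.sum_le_sum (fun p _ => by rw [abs_sub_comm]; exact le_abs_self _)
      linarith
    have hKg : s - 1 ≤ (K:ℝ) := by linarith
    have hprod : (s-1)*(s-2) ≤ (K:ℝ)*((K:ℝ)-1) := by
      apply mul_le_mul hKg (by linarith) (by linarith) (by linarith)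
    have hTprod : T*((s-1)*(s-2)) ≤ T*((K:ℝ)*((K:ℝ)-1)) :=
      mul_le_mul_of_nonneg_left hprod hT.le
    have hexp : T*((s-1)*(s-2)) = 1/(4*T) - 3/2 + 2*T := by
      rw [hsdef]
      field_simp
      ring
    linarith

set_option maxHeartbeats 2000000 in
/-- Any `n` points in the unit square admit an empty open axis-parallel
rectangle of area at least `(5/4)·1/(n+5)`. -/
theorem stmt_6 (n : ℕ) (S : Finset (ℝ × ℝ)) (hcard : S.card = n)
    (hS : ∀ p ∈ S, p.1 ∈ Set.Icc (0:ℝ) 1 ∧ p.2 ∈ Set.Icc (0:ℝ) 1) :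
    ∃ a b c d : ℝ, 0 ≤ a ∧ a < b ∧ b ≤ 1 ∧ 0 ≤ c ∧ c < d ∧ d ≤ 1 ∧
      (∀ p ∈ S, ¬ (a < p.1 ∧ p.1 < b ∧ c < p.2 ∧ p.2 < d)) ∧
      (5 / 4) * (1 / ((n : ℝ) + 5)) ≤ (b - a) * (d - c) := by
  classical
  rcases Nat.eq_zero_or_pos n with hn0 | hnpos
  · subst hn0
    refine ⟨0, 1, 0, 1, le_rfl, one_pos, le_rfl, le_rfl, one_pos, le_rfl, ?_, ?_⟩
    · intro p hp
      have hSe : S = ∅ := Finset.card_eq_zero.mp hcard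
      rw [hSe] at hp
      exact absurd hp (Finset.notMem_empty p)
    · norm_num
  · by_contra hcon
    push_neg at hcon
    set T : ℝ := 5 / 4 * (1 / ((n:ℝ) + 5)) with hTdef
    have hn5 : (0:ℝ) < (n:ℝ) + 5 := by positivity
    have hT : 0 < T := by rw [hTdef]; positivity
    have hArea : ∀ a b c d : ℝ, 0 ≤ a → a < b → b ≤ 1 → 0 ≤ c → c < d → d ≤ 1 →
        (∀ p ∈ S, ¬ (a < p.1 ∧ p.1 < b ∧ c < p.2 ∧ p.2 < d)) → (b - a) * (d - c) < T := by
      intro a b c d h1 h2 h3 h4 h5 h6 hemp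
      apply hcon a b c d h1 h2 h3 h4 h5 h6
      intro p hp u1 u2 u3
      by_contra hq2
      exact hemp p hp ⟨u1, u2, u3, lt_of_not_ge hq2⟩
    have hHit : ∀ a b c d : ℝ, 0 ≤ a → a < b → b ≤ 1 → 0 ≤ c → c < d → d ≤ 1 →
        T ≤ (b - a) * (d - c) → ∃ p ∈ S, a < p.1 ∧ p.1 < b ∧ c < p.2 ∧ p.2 < d := by
      intro a b c d h1 h2 h3 h4 h5 h6 hA
      by_contra hq
      push_neg at hq
      have hlt := hArea a b c d h1 h2 h3 h4 h5 h6 ?_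
      · linarith
      · intro p hp hco
        obtain ⟨u1, u2, u3, u4⟩ := hco
        exact absurd u4 (not_lt.mpr (hq p hp u1 u2 u3))
    have hSne : S.Nonempty := Finset.card_pos.mp (hcard ▸ hnpos)
    set X : Finset ℝ := S.image Prod.fst with hXdef
    have hXne : X.Nonempty := hSne.image _
    have hX0 : ∀ x ∈ X, 0 ≤ x := by
      intro x hx
      obtain ⟨p, hp, hpx⟩ := Finset.mem_image.mp hx
      rw [← hpx]
      exact (hS p hp).1.1
    have hX1 : ∀ x ∈ X, x ≤ 1 := by
      intro x hx
      obtain ⟨p, hp, hpx⟩ := Finset.mem_image.mp hx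
      rw [← hpx]
      exact (hS p hp).1.2
    set DD : ℝ := ∑ p ∈ S, |p.2 - 1/2| with hDDdef
    have hDD : 1/(4*T) - 3/2 ≤ DD := by
      apply density_sum S T hT
      intro c d hc hcd hd hTle
      obtain ⟨p, hp, h⟩ := hHit 0 1 c d le_rfl one_pos le_rfl hc hcd hd
        (by rw [show ((1:ℝ)-0)*(d-c) = d - c by ring]; exact hTle)
      exact ⟨p, hp, h.2.2⟩
    -- per-column bound
    have hcol : ∀ ξ ∈ X, rnb X ξ - lnb X ξ ≤
        T * (2*((S.filter (fun p => p.1 = ξ)).card:ℝ)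
          - 2*∑ p ∈ S.filter (fun p => p.1 = ξ), |p.2 - 1/2|) := by
      intro ξ hξ
      have hξ0 : 0 ≤ ξ := hX0 ξ hξ
      have hξ1 : ξ ≤ 1 := hX1 ξ hξ
      have hlr : lnb X ξ < rnb X ξ := lnb_lt_rnb X ξ hξ0 hξ1
      set w : ℝ := rnb X ξ - lnb X ξ with hwdef
      have hw : 0 < w := by rw [hwdef]; linarith
      set col : Finset (ℝ×ℝ) := S.filter (fun p => p.1 = ξ) with hcoldef
      have hcolne : col.Nonempty := by
        obtain ⟨p, hp, hpx⟩ := Finset.mem_image.mp hξ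
        exact ⟨p, Finset.mem_filter.mpr ⟨hp, hpx⟩⟩
      have hinj : Set.InjOn Prod.snd (col : Set (ℝ×ℝ)) := by
        intro p hp q hq hpq
        have hp' := Finset.mem_filter.mp (Finset.mem_coe.mp hp)
        have hq' := Finset.mem_filter.mp (Finset.mem_coe.mp hq)
        exact Prod.ext (hp'.2.trans hq'.2.symm) hpq
      set Y : Finset ℝ := col.image Prod.snd with hYdef
      have hYne : Y.Nonempty := hcolne.image _
      have hYcard : Y.card = col.card := Finset.card_image_of_injOn hinj
      have hYsum : ∑ y ∈ Y, |y - (1:ℝ)/2| = ∑ p ∈ col, |p.2 - 1/2| :=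
        Finset.sum_image (fun p hp q hq h => hinj hp hq h)
      have hY01 : ∀ y ∈ Y, 0 ≤ y ∧ y ≤ 1 := by
        intro y hy
        obtain ⟨p, hp, hpy⟩ := Finset.mem_image.mp hy
        have hpS := (Finset.mem_filter.mp hp).1
        rw [← hpy]
        exact ⟨(hS p hpS).2.1, (hS p hpS).2.2⟩
      have hdense : ∀ c d : ℝ, 0 ≤ c → d ≤ 1 → T/w ≤ d - c → ∃ y ∈ Y, c < y ∧ y < d := by
        intro c d hc hd hlen
        have hcd : c < d := by
          have : 0 < T/w := by positivity
          linarith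
        have harea : T ≤ (rnb X ξ - lnb X ξ) * (d - c) := by
          rw [div_le_iff₀ hw] at hlen
          calc T ≤ (d-c)*w := hlen
          _ = (rnb X ξ - lnb X ξ) * (d - c) := by rw [hwdef]; ring
        obtain ⟨p, hp, hp1, hp2, hp3, hp4⟩ := hHit (lnb X ξ) (rnb X ξ) c d
          (lnb_nonneg X ξ) hlr (rnb_le_one X ξ hX1) hc hcd hd harea
        have hpX : p.1 ∈ X := Finset.mem_image_of_mem Prod.fst hp
        have hpξ : p.1 = ξ := between_eq X ξ p.1 hpX hp1 hp2
        have hpcol : p ∈ col := Finset.mem_filter.mpr ⟨hp, hpξ⟩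
        exact ⟨p.2, Finset.mem_image_of_mem Prod.snd hpcol, hp3, hp4⟩
      have hcl := column_lemma Y hYne hY01 (T/w) (by positivity) hdense
      rw [one_div_div, hYcard, hYsum] at hcl
      -- hcl : w/T + 2*Σ ≤ 2*col.card
      rw [div_add' _ _ _ (ne_of_gt hT)] at hcl
      have := (div_le_iff₀ hT).mp hcl
      calc w = (w + 2*(∑ p ∈ col, |p.2 - 1/2|)*T) - 2*(∑ p ∈ col, |p.2 - 1/2|)*T := by ring
      _ ≤ 2*(col.card:ℝ)*T - 2*(∑ p ∈ col, |p.2 - 1/2|)*T := by linarith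
      _ = T * (2*(col.card:ℝ) - 2*∑ p ∈ col, |p.2 - 1/2|) := by ring
    -- sum of widths
    have hsplit : ∑ ξ ∈ X, (rnb X ξ - lnb X ξ)
        = (1 - X.min' hXne) + X.max' hXne := by
      have h1 := sumR X.card X rfl hXne hX1
      have h2 := sumL X.card X rfl hXne hX0
      calc ∑ ξ ∈ X, (rnb X ξ - lnb X ξ)
          = ∑ ξ ∈ X, ((rnb X ξ - ξ) + (ξ - lnb X ξ)) := by
            apply Finset.sum_congr rfl
            intro ξ _
            ring
      _ = (∑ ξ ∈ X, (rnb X ξ - ξ)) + ∑ ξ ∈ X, (ξ - lnb X ξ) := Finset.sum_add_distrib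
      _ = (1 - X.min' hXne) + X.max' hXne := by rw [h1, h2]
    have hmin : X.min' hXne < T := by
      set a := X.min' hXne with hadef
      have haX : a ∈ X := X.min'_mem hXne
      rcases le_or_gt a 0 with h | h
      · linarith
      · have := hArea 0 a 0 1 le_rfl h (hX1 a haX) le_rfl one_pos le_rfl ?_
        · calc a = (a - 0)*(1 - 0) := by ring
          _ < T := this
        · intro p hp hco
          obtain ⟨u1, u2, -⟩ := hco
          have : a ≤ p.1 := X.min'_le p.1 (Finset.mem_image_of_mem Prod.fst hp)
          linarith
    have hmax : 1 - T < X.max' hXne := by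
      set b := X.max' hXne with hbdef
      have hbX : b ∈ X := X.max'_mem hXne
      rcases le_or_gt 1 b with h | h
      · linarith
      · have := hArea b 1 0 1 (hX0 b hbX) h le_rfl le_rfl one_pos le_rfl ?_
        · nlinarith
        · intro p hp hco
          obtain ⟨u1, -⟩ := hco
          have : p.1 ≤ b := X.le_max' p.1 (Finset.mem_image_of_mem Prod.fst hp)
          linarith
    -- fiberwise sums
    have hcards : ∑ ξ ∈ X, ((S.filter (fun p => p.1 = ξ)).card:ℝ) = (n:ℝ) := by
      rw [← hcard]
      have := Finset.card_eq_sum_card_fiberwise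
        (fun p (hp : p ∈ S) => Finset.mem_image_of_mem Prod.fst hp)
      rw [this]
      push_cast
      rfl
    have hDDs : ∑ ξ ∈ X, (∑ p ∈ S.filter (fun p => p.1 = ξ), |p.2 - 1/2|) = DD :=
      Finset.sum_fiberwise_of_maps_to
        (fun p hp => Finset.mem_image_of_mem Prod.fst hp) _
    have hbig : (1 - X.min' hXne) + X.max' hXne ≤ T * (2*(n:ℝ) - 2*DD) := by
      rw [← hsplit]
      calc ∑ ξ ∈ X, (rnb X ξ - lnb X ξ)
          ≤ ∑ ξ ∈ X, T * (2*((S.filter (fun p => p.1 = ξ)).card:ℝ)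
              - 2*∑ p ∈ S.filter (fun p => p.1 = ξ), |p.2 - 1/2|) :=
            Finset.sum_le_sum hcol
      _ = T * (2*(n:ℝ) - 2*DD) := by
          rw [← Finset.mul_sum]
          congr 1
          rw [Finset.sum_sub_distrib, ← Finset.mul_sum, ← Finset.mul_sum, hcards, hDDs]
    have hfin1 : 2 - 2*T < T*(2*(n:ℝ) - 2*DD) := by
      linarith [hmin, hmax, hbig]
    have hfin2 : T*(2*(n:ℝ) - 2*DD) ≤ 2*(n:ℝ)*T - 1/2 + 3*T := by
      have h1 : 2*(n:ℝ) - 2*DD ≤ 2*(n:ℝ) - (1/(2*T)) + 3 := by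
        have : 2*(1/(4*T)) = 1/(2*T) := by
          field_simp
          ring
        linarith [hDD]
      have h2 := mul_le_mul_of_nonneg_left h1 hT.le
      have h3 : T*(2*(n:ℝ) - (1/(2*T)) + 3) = 2*(n:ℝ)*T - 1/2 + 3*T := by
        field_simp
      linarith
    have h5 : (5:ℝ)/2 < T*(2*(n:ℝ)+5) := by nlinarith
    have h6 : T*(4*((n:ℝ)+5)) = 5 := by
      rw [hTdef]
      field_simp
    nlinarith [h5, h6, hT]
end

section
/- Let C_n ⊂ [0,1]^2 be the van der Corput set of n points: for 0 ≤ k ≤ n-1, the k-th point is (k/n, Σ_{j≥0} a_j 2^{-j-1}), where k = Σ_{j≥0} a_j 2^j is the binary representation of k with a_j ∈ {0,1}. Then every open axis-parallel rectangle contained in [0,1]^2 that contains no point of C_n has area less than 4/n. -/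
/-- The binary bit-reversal (van der Corput) map: `k = Σ a_j 2^j ↦ Σ a_j 2^{-j-1}`.
All binary digits of `k` of index `≥ k` vanish, so summing over `range k` suffices. -/
noncomputable def vdcY (k : ℕ) : ℝ :=
  ∑ j ∈ Finset.range k, ((k / 2 ^ j % 2 : ℕ) : ℝ) * ((2:ℝ)⁻¹) ^ (j + 1)


/-- m-bit reversal. -/
def rv (m k : ℕ) : ℕ := ∑ j ∈ Finset.range m, (k / 2^j % 2) * 2^(m-1-j)

lemma rv_succ (m k : ℕ) : rv (m+1) k = (k % 2) * 2^m + rv m (k/2) := by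
  unfold rv
  rw [Finset.sum_range_succ']
  rw [add_comm]
  congr 1
  · simp
  · apply Finset.sum_congr rfl
    intro j hj
    have h1 : k / 2^(j+1) = (k/2) / 2^j := by
      rw [pow_succ', Nat.div_div_eq_div_mul]
    have h2 : m + 1 - 1 - (j+1) = m - 1 - j := by omega
    rw [h1, h2]

lemma rv_lt (m k : ℕ) : rv m k < 2^m := by
  induction m generalizing k with
  | zero => simp [rv]
  | succ m ih =>
    rw [rv_succ]
    have : k % 2 ≤ 1 := Nat.lt_succ_iff.mp (Nat.mod_lt _ (by norm_num))
    calc (k % 2) * 2^m + rv m (k/2) ≤ 1 * 2^m + rv m (k/2) := by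
          exact Nat.add_le_add_right (Nat.mul_le_mul_right _ this) _
      _ < 2^m + 2^m := by
          have := ih (k/2); omega
      _ = 2^(m+1) := by ring

lemma rv_mod (m k : ℕ) : rv m (k % 2^m) = rv m k := by
  induction m generalizing k with
  | zero => simp [rv]
  | succ m ih =>
    rw [rv_succ, rv_succ]
    have h1 : k % 2^(m+1) % 2 = k % 2 := by
      rw [Nat.mod_mod_of_dvd]
      exact ⟨2^m, by ring⟩
    have h2 : k % 2^(m+1) / 2 = k / 2 % 2^m := by
      rw [pow_succ']
      exact Nat.mod_mul_right_div_self k 2 (2^m)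
    rw [h1, h2, ih]

lemma rv_inj (m : ℕ) : ∀ k, k < 2^m → ∀ k', k' < 2^m → rv m k = rv m k' → k = k' := by
  induction m with
  | zero => intro k hk k' hk' _; omega
  | succ m ih =>
    intro k hk k' hk' h
    rw [rv_succ, rv_succ] at h
    have b1 := rv_lt m (k/2)
    have b2 := rv_lt m (k'/2)
    have hm2 : k % 2 = k' % 2 ∧ rv m (k/2) = rv m (k'/2) := by
      rcases Nat.mod_two_eq_zero_or_one k with h0|h0 <;>
        rcases Nat.mod_two_eq_zero_or_one k' with h0'|h0' <;>
        rw [h0, h0'] at h <;> simp at h <;> omega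
    obtain ⟨hm2, heq⟩ := hm2
    have := ih (k/2) (by omega) (k'/2) (by omega) heq
    omega

lemma rv_surj (m s : ℕ) (hs : s < 2^m) : ∃ r, r < 2^m ∧ rv m r = s := by
  classical
  have himg : (Finset.range (2^m)).image (rv m) = Finset.range (2^m) := by
    apply Finset.eq_of_subset_of_card_le
    · intro x hx
      simp only [Finset.mem_image, Finset.mem_range] at hx ⊢
      obtain ⟨k, _, rfl⟩ := hx
      exact rv_lt m k
    · rw [Finset.card_image_of_injOn]
      · intro x hx y hy h
        exact rv_inj m x (Finset.mem_range.mp hx) y (Finset.mem_range.mp hy) h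
  have : s ∈ (Finset.range (2^m)).image (rv m) := by
    rw [himg]; exact Finset.mem_range.mpr hs
  obtain ⟨r, hr, hrs⟩ := Finset.mem_image.mp this
  exact ⟨r, Finset.mem_range.mp hr, hrs⟩

lemma vdcY_eq (k M : ℕ) (h : k ≤ M) :
    vdcY k = ∑ j ∈ Finset.range M, ((k / 2 ^ j % 2 : ℕ) : ℝ) * ((2:ℝ)⁻¹) ^ (j + 1) := by
  unfold vdcY
  apply Finset.sum_subset (Finset.range_subset_range.2 h)
  intro j _ hj
  rw [Finset.mem_range, not_lt] at hj
  have : k / 2^j = 0 :=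
    Nat.div_eq_of_lt (lt_of_lt_of_le (Nat.lt_two_pow_self (n := k)) (Nat.pow_le_pow_right (by norm_num) hj))
  simp [this]

lemma tail_sum (m M : ℕ) (h : m ≤ M) :
    ∑ j ∈ Finset.Ico m M, ((2:ℝ)⁻¹)^(j+1) = (2⁻¹)^m - (2⁻¹)^M := by
  induction M, h using Nat.le_induction with
  | base => simp
  | succ M hM ih =>
    rw [Finset.sum_Ico_succ_top hM, ih, pow_succ]
    ring

lemma vdcY_bounds (m k : ℕ) :
    (rv m k : ℝ) * (2⁻¹)^m ≤ vdcY k ∧ vdcY k < ((rv m k : ℝ) + 1) * (2⁻¹)^m := by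
  set M := max m k with hM
  rw [vdcY_eq k M (le_max_right _ _)]
  rw [Finset.range_eq_Ico, ← Finset.sum_Ico_consecutive _ (Nat.zero_le m) (le_max_left m k)]
  have head : ∑ j ∈ Finset.Ico 0 m, ((k / 2 ^ j % 2 : ℕ) : ℝ) * ((2:ℝ)⁻¹) ^ (j + 1)
      = (rv m k : ℝ) * (2⁻¹)^m := by
    rw [← Finset.range_eq_Ico]
    unfold rv
    push_cast
    rw [Finset.sum_mul]
    apply Finset.sum_congr rfl
    intro j hj
    have hj' : j < m := Finset.mem_range.mp hj
    rw [mul_assoc]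
    congr 1
    have hexp : (m - 1 - j) + (j + 1) = m := by omega
    rw [inv_pow, inv_pow, eq_comm, mul_inv_eq_iff_eq_mul₀ (by positivity), inv_mul_eq_div,
      eq_div_iff (by positivity), ← pow_add, hexp]
  have tail_nonneg : (0:ℝ) ≤ ∑ j ∈ Finset.Ico m M, ((k / 2 ^ j % 2 : ℕ) : ℝ) * ((2:ℝ)⁻¹) ^ (j + 1) := by
    apply Finset.sum_nonneg; intro j _; positivity
  have tail_lt : ∑ j ∈ Finset.Ico m M, ((k / 2 ^ j % 2 : ℕ) : ℝ) * ((2:ℝ)⁻¹) ^ (j + 1) < (2⁻¹)^m := by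
    calc ∑ j ∈ Finset.Ico m M, ((k / 2 ^ j % 2 : ℕ) : ℝ) * ((2:ℝ)⁻¹) ^ (j + 1)
        ≤ ∑ j ∈ Finset.Ico m M, ((2:ℝ)⁻¹) ^ (j + 1) := by
          apply Finset.sum_le_sum
          intro j _
          have h2 : k / 2^j % 2 < 2 := Nat.mod_lt _ (by norm_num)
          have : ((k / 2^j % 2 : ℕ) : ℝ) ≤ 1 := by exact_mod_cast Nat.lt_succ_iff.mp h2
          nlinarith [pow_pos (by norm_num : (0:ℝ) < 2⁻¹) (j+1)]
      _ = (2⁻¹)^m - (2⁻¹)^M := tail_sum m M (le_max_left m k)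
      _ < (2⁻¹)^m := by
          have : (0:ℝ) < (2⁻¹)^M := by positivity
          linarith
  rw [head]
  constructor
  · linarith
  · linarith


set_option maxHeartbeats 1000000 in
/-- Every open axis-parallel rectangle in the unit square containing no point
of the van der Corput set `C_n = {(k/n, y(k)) : 0 ≤ k ≤ n-1}` has area `< 4/n`. -/
theorem stmt_8 (n : ℕ) (hn : 1 ≤ n)
    (a b c d : ℝ) (ha : 0 ≤ a) (hab : a < b) (hb : b ≤ 1)
    (hc : 0 ≤ c) (hcd : c < d) (hd : d ≤ 1)
    (hempty : ∀ k < n,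
      ¬ (a < (k : ℝ) / n ∧ (k : ℝ) / n < b ∧ c < vdcY k ∧ vdcY k < d)) :
    (b - a) * (d - c) < 4 / n := by
  have hn' : (0:ℝ) < n := by exact_mod_cast hn
  have hdc : 0 < d - c := by linarith
  have hex : ∃ m : ℕ, ((2:ℝ)⁻¹)^m ≤ (d - c)/2 := by
    obtain ⟨m, hm⟩ := exists_pow_lt_of_lt_one (by linarith : (0:ℝ) < (d-c)/2)
      (by norm_num : (2:ℝ)⁻¹ < 1)
    exact ⟨m, hm.le⟩
  set m := Nat.find hex with hmdef
  have hm1 : ((2:ℝ)⁻¹)^m ≤ (d-c)/2 := Nat.find_spec hex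
  have hmpos : 0 < m := by
    rcases Nat.eq_zero_or_pos m with h0 | h
    · exfalso
      have := hm1
      rw [h0] at this
      simp at this
      linarith
    · exact h
  have hm2 : (d-c)/2 < ((2:ℝ)⁻¹)^(m-1) := by
    have := Nat.find_min hex (m := m - 1) (by omega)
    push_neg at this
    linarith
  set ε : ℝ := ((2:ℝ)⁻¹)^m with hε
  have hεpos : 0 < ε := by positivity
  have h2ε : 2*ε ≤ d - c := by linarith
  have h4ε : d - c < 4*ε := by
    have hm1' : ((2:ℝ)⁻¹)^(m-1) = 2*ε := by
      rw [hε]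
      have : m = (m-1) + 1 := by omega
      rw [this, pow_succ]
      norm_num
      ring
    linarith [hm2, hm1'.symm.le]
  have hεpow : (2:ℝ)^m * ε = 1 := by
    rw [hε, inv_pow, mul_inv_cancel₀ (by positivity)]
  -- choose the dyadic interval [s*ε, (s+1)*ε] inside (c,d)
  set s : ℕ := ⌊c / ε⌋₊ + 1 with hsdef
  have hcε : (0:ℝ) ≤ c/ε := by positivity
  have hfl : (⌊c/ε⌋₊ : ℝ) ≤ c/ε := Nat.floor_le hcε
  have hfl2 : c/ε < (⌊c/ε⌋₊ : ℝ) + 1 := Nat.lt_floor_add_one _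
  have hs1 : c < (s:ℝ) * ε := by
    have : c/ε < (s:ℝ) := by rw [hsdef]; push_cast; linarith
    calc c = (c/ε) * ε := by field_simp
      _ < (s:ℝ) * ε := by exact mul_lt_mul_of_pos_right this hεpos
  have hsle : (s:ℝ) * ε ≤ c + ε := by
    have : (s:ℝ) ≤ c/ε + 1 := by rw [hsdef]; push_cast; linarith
    have h2 : (s:ℝ) * ε ≤ (c/ε + 1) * ε := mul_le_mul_of_nonneg_right this hεpos.le
    calc (s:ℝ) * ε ≤ (c/ε + 1) * ε := h2
      _ = c + ε := by field_simp
  have hs2 : ((s:ℝ)+1) * ε ≤ d := by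
    have : ((s:ℝ)+1) * ε = (s:ℝ)*ε + ε := by ring
    linarith
  have hslt : s < 2^m := by
    have h1 : (s:ℝ) * ε < 1 := by
      have : c ≤ 1 - 2*ε := by linarith
      linarith
    have h2 : (s:ℝ) < (2:ℝ)^m := by
      by_contra hcon
      push_neg at hcon
      have : (2:ℝ)^m * ε ≤ (s:ℝ) * ε := mul_le_mul_of_nonneg_right hcon hεpos.le
      linarith [hεpow]
    exact_mod_cast (by push_cast at h2 ⊢; exact h2 : (s:ℝ) < ((2^m : ℕ) : ℝ))
  obtain ⟨r, hr, hrs⟩ := rv_surj m s hslt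
  -- any k ≡ r (mod 2^m) has vdcY k ∈ (c, d)
  have hy : ∀ k : ℕ, k % 2^m = r → c < vdcY k ∧ vdcY k < d := by
    intro k hk
    have hb' := vdcY_bounds m k
    have hrk : rv m k = s := by rw [← rv_mod, hk, hrs]
    rw [hrk] at hb'
    exact ⟨lt_of_lt_of_le hs1 hb'.1, lt_of_lt_of_le hb'.2 hs2⟩
  -- x-gap bound
  have hgap : b - a ≤ (2:ℝ)^m / n := by
    by_contra hcon
    push_neg at hcon
    have hr' : (r:ℝ) < (2:ℝ)^m := by
      have : ((r:ℕ):ℝ) < ((2^m : ℕ):ℝ) := by exact_mod_cast hr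
      push_cast at this
      exact this
    have h2' : (2:ℝ)^m < (b-a)*n := by
      rw [div_lt_iff₀ hn'] at hcon
      linarith
    by_cases har : a * n < (r:ℝ)
    · have hra : a < (r:ℝ)/n := by rw [lt_div_iff₀ hn']; linarith
      have hrb : (r:ℝ)/n < b := by
        have h1 : (r:ℝ)/n < (2:ℝ)^m/n := by gcongr
        linarith [hcon]
      have hrn : r < n := by
        have h1 : (r:ℝ) < (n:ℝ) := by
          have h2 := hrb.trans_le hb
          rw [div_lt_one hn'] at h2
          exact h2
        exact_mod_cast h1
      exact hempty r hrn ⟨hra, hrb, (hy r (Nat.mod_eq_of_lt hr)).1, (hy r (Nat.mod_eq_of_lt hr)).2⟩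
    · push_neg at har
      set j : ℕ := ⌊(a*n - r)/2^m⌋₊ with hjdef
      set k : ℕ := r + (j+1)*2^m with hkdef
      have h2mpos : (0:ℝ) < (2:ℝ)^m := by positivity
      have hx0 : (0:ℝ) ≤ (a*n - r)/2^m := div_nonneg (by linarith) h2mpos.le
      have hjle : (j:ℝ) ≤ (a*n - r)/2^m := Nat.floor_le hx0
      have hjgt : (a*n - r)/2^m < (j:ℝ) + 1 := Nat.lt_floor_add_one _
      have hkr : (k:ℝ) = (r:ℝ) + ((j:ℝ)+1)*2^m := by
        rw [hkdef]; push_cast; ring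
      have hka : a*n < (k:ℝ) := by
        rw [hkr]
        have h1 := (div_lt_iff₀ h2mpos).mp hjgt
        linarith
      have hkb : (k:ℝ) < b*n := by
        rw [hkr]
        have h1 : (j:ℝ)*2^m ≤ a*n - (r:ℝ) := (le_div_iff₀ h2mpos).mp hjle
        linarith
      have hkan : a < (k:ℝ)/n := (lt_div_iff₀ hn').mpr (by linarith)
      have hkbn : (k:ℝ)/n < b := (div_lt_iff₀ hn').mpr hkb
      have hkn : k < n := by
        have h1 : (k:ℝ) < (n:ℝ) := by nlinarith
        exact_mod_cast h1
      have hkm : k % 2^m = r := by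
        rw [hkdef, Nat.add_mul_mod_self_right]
        exact Nat.mod_eq_of_lt hr
      exact hempty k hkn ⟨hkan, hkbn, (hy k hkm).1, (hy k hkm).2⟩
  calc (b - a) * (d - c) < (b - a) * (4*ε) := by nlinarith
    _ ≤ ((2:ℝ)^m / n) * (4*ε) := by nlinarith
    _ = 4 / n := by
        field_simp
        nlinarith [hεpow]
end

section
/- Let d ≥ 2 and let p_1 < p_2 < ... < p_{d-1} be the first d-1 primes. Let H_n ⊂ [0,1]^d be the Halton–Hammersley set of n points: for 0 ≤ k ≤ n-1, the k-th point has coordinates (k/n, x_1(k), ..., x_{d-1}(k)) where x_i(k) = Σ_{j≥0} a_{i,j} p_i^{-j-1} and k = Σ_{j≥0} a_{i,j} p_i^j is the base-p_i representation of k. Then every open axis-parallel box contained in [0,1]^d containing no point of H_n has volume less than (2^{d-1} ∏_{i=1}^{d-1} p_i)/n. -/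
/-- The radical-inverse map in base `p`:
`k = Σ a_j p^j ↦ Σ a_j p^{-j-1}`. Since `p ≥ 2`, all base-`p` digits of `k`
of index `≥ k` vanish, so summing over `range k` suffices. -/
noncomputable def radInv (p k : ℕ) : ℝ :=
  ∑ j ∈ Finset.range k, ((k / p ^ j % p : ℕ) : ℝ) * ((p:ℝ)⁻¹) ^ (j + 1)

/-- The `k`-th point of the Halton–Hammersley set of `n` points in `[0,1]^d`:
first coordinate `k/n`, and `i`-th coordinate (for `1 ≤ i ≤ d-1`) the
radical inverse of `k` in base the `i`-th prime. -/
noncomputable def halton (d n k : ℕ) : Fin d → ℝ := fun i =>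
  if (i : ℕ) = 0 then (k : ℝ) / n else radInv (Nat.nth Nat.Prime ((i : ℕ) - 1)) k

namespace HHaux

lemma digit_zero_of_le {p k j : ℕ} (hp : 2 ≤ p) (h : k ≤ j) : k / p ^ j = 0 := by
  apply Nat.div_eq_of_lt
  calc k ≤ j := h
    _ < 2 ^ j := Nat.lt_two_pow_self
    _ ≤ p ^ j := Nat.pow_le_pow_left hp j

lemma radInv_eq {p k m : ℕ} (hp : 2 ≤ p) (h : k ≤ m) :
    radInv p k = ∑ j ∈ Finset.range m, ((k / p ^ j % p : ℕ) : ℝ) * ((p:ℝ)⁻¹) ^ (j + 1) := by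
  rw [radInv]
  apply Finset.sum_subset (Finset.range_subset_range.2 h)
  intro j _ hj
  simp only [Finset.mem_range, not_lt] at hj
  rw [digit_zero_of_le hp hj]
  simp

lemma radInv_nonneg (p k : ℕ) : 0 ≤ radInv p k := by
  apply Finset.sum_nonneg
  intro j _
  positivity

lemma geom_aux {p : ℕ} (hp : 2 ≤ p) (m : ℕ) :
    ∑ j ∈ Finset.range m, ((p:ℝ) - 1) * ((p:ℝ)⁻¹) ^ (j + 1) = 1 - ((p:ℝ)⁻¹) ^ m := by
  have hp0 : (p:ℝ) ≠ 0 := by positivity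
  induction m with
  | zero => simp
  | succ m ih =>
    rw [Finset.sum_range_succ, ih]
    field_simp
    have hx : (p:ℝ) * (1 / (p:ℝ)) = 1 := by rw [one_div, mul_inv_cancel₀ hp0]
    linear_combination (1 / (p:ℝ)) ^ m * hx

lemma radInv_lt_one {p : ℕ} (hp : 2 ≤ p) (k : ℕ) : radInv p k < 1 := by
  have hp0 : (0:ℝ) < (p:ℝ) := by positivity
  have h1 : radInv p k ≤ ∑ j ∈ Finset.range k, ((p:ℝ) - 1) * ((p:ℝ)⁻¹) ^ (j + 1) := by
    apply Finset.sum_le_sum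
    intro j _
    apply mul_le_mul_of_nonneg_right _ (by positivity)
    have : k / p ^ j % p < p := Nat.mod_lt _ (by omega)
    have : (↑(k / p ^ j % p) : ℝ) ≤ (p:ℝ) - 1 := by
      have : k / p ^ j % p ≤ p - 1 := by omega
      calc (↑(k / p ^ j % p) : ℝ) ≤ ((p - 1 : ℕ) : ℝ) := by exact_mod_cast this
        _ = (p:ℝ) - 1 := by push_cast [Nat.cast_sub (by omega : 1 ≤ p)]; ring
    linarith
  rw [geom_aux hp k] at h1
  have : (0:ℝ) < ((p:ℝ)⁻¹) ^ k := by positivity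
  linarith

lemma digit_mod_pow {p k t j : ℕ} (hp : 0 < p) (hj : j < t) :
    k % p ^ t / p ^ j % p = k / p ^ j % p := by
  conv_rhs => rw [← Nat.div_add_mod k (p ^ t)]
  have h1 : p ^ t = p ^ j * p ^ (t - j) := by rw [← pow_add]; congr 1; omega
  rw [h1, mul_assoc, Nat.mul_add_div (Nat.pow_pos hp)]
  have h2 : p ∣ p ^ (t - j) := dvd_pow_self p (by omega)
  obtain ⟨c, hc⟩ := h2
  rw [hc, mul_assoc p c, Nat.mul_add_mod]

/-- reversal of the first `t` base-`p` digits of `m`. -/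
def rev (p t m : ℕ) : ℕ := ∑ j ∈ Finset.range t, (m / p ^ j % p) * p ^ (t - 1 - j)

lemma geom_nat {p : ℕ} (hp : 0 < p) (t : ℕ) :
    ∑ j ∈ Finset.range t, (p - 1) * p ^ j = p ^ t - 1 := by
  induction t with
  | zero => simp
  | succ t ih =>
    have h1 : 1 ≤ p ^ t := Nat.one_le_pow _ _ hp
    have h2 : (p - 1) * p ^ t = p ^ t * p - p ^ t := by rw [Nat.sub_one_mul, mul_comm]
    have h3 : p ^ t ≤ p ^ t * p := Nat.le_mul_of_pos_right _ hp
    rw [Finset.sum_range_succ, ih, pow_succ, h2]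
    omega

lemma rev_lt {p t : ℕ} (hp : 0 < p) (m : ℕ) : rev p t m < p ^ t := by
  have h1 : rev p t m ≤ ∑ j ∈ Finset.range t, (p - 1) * p ^ (t - 1 - j) := by
    apply Finset.sum_le_sum
    intro j _
    apply Nat.mul_le_mul_right
    have := Nat.mod_lt (m / p ^ j) hp
    omega
  have h2 : ∑ j ∈ Finset.range t, (p - 1) * p ^ (t - 1 - j) = p ^ t - 1 := by
    rw [← geom_nat hp t]
    exact Finset.sum_range_reflect (fun j => (p - 1) * p ^ j) t
  have h3 : 1 ≤ p ^ t := Nat.one_le_pow _ _ hp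
  omega

lemma rev_mod {p t : ℕ} (hp : 0 < p) (m : ℕ) : rev p t (m % p ^ t) = rev p t m := by
  apply Finset.sum_congr rfl
  intro j hj
  rw [digit_mod_pow hp (Finset.mem_range.1 hj)]

lemma rev_succ_left (p t m : ℕ) :
    rev p (t + 1) m = (m % p) * p ^ t + rev p t (m / p) := by
  rw [rev, Finset.sum_range_succ']
  rw [add_comm]
  congr 1
  · simp
  · apply Finset.sum_congr rfl
    intro j hj
    rw [pow_succ', ← Nat.div_div_eq_div_mul]
    congr 2
    omega

lemma rev_succ_right (p t m : ℕ) :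
    rev p (t + 1) m = m / p ^ t % p + p * rev p t m := by
  rw [rev, Finset.sum_range_succ, add_comm]
  congr 1
  · simp
  · rw [rev, Finset.mul_sum]
    apply Finset.sum_congr rfl
    intro j hj
    have hj' := Finset.mem_range.1 hj
    rw [mul_comm p, mul_assoc, ← pow_succ]
    congr 2
    omega

lemma rev_rev {p : ℕ} (hp : 0 < p) : ∀ t m, m < p ^ t → rev p t (rev p t m) = m := by
  intro t
  induction t with
  | zero =>
    intro m hm
    simp only [pow_zero, Nat.lt_one_iff] at hm
    subst hm
    simp [rev]
  | succ t ih =>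
    intro m hm
    set r' := rev p t (m / p) with hr'
    have hr'lt : r' < p ^ t := rev_lt hp _
    have hmp : m % p < p := Nat.mod_lt _ hp
    have hpt : 0 < p ^ t := Nat.pow_pos hp
    have e1 : (m % p * p ^ t + r') / p ^ t % p = m % p := by
      rw [mul_comm, Nat.mul_add_div hpt, Nat.div_eq_of_lt hr'lt, Nat.add_zero,
        Nat.mod_eq_of_lt hmp]
    have hdiv : m / p < p ^ t := by
      rw [pow_succ] at hm
      exact Nat.div_lt_of_lt_mul (by rwa [mul_comm] at hm)
    have e2 : rev p t (m % p * p ^ t + r') = m / p := by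
      rw [← rev_mod hp, add_comm, Nat.add_mul_mod_self_right, Nat.mod_eq_of_lt hr'lt, hr',
        ih (m / p) hdiv]
    have hin : rev p (t+1) m = m % p * p ^ t + r' := rev_succ_left p t m
    rw [hin, rev_succ_right, e1, e2]
    have := Nat.div_add_mod m p
    omega

lemma radInv_split {p : ℕ} (hp : 2 ≤ p) (t k : ℕ) :
    radInv p k = (rev p t (k % p ^ t) : ℝ) * ((p:ℝ)⁻¹) ^ t
      + ((p:ℝ)⁻¹) ^ t * radInv p (k / p ^ t) := by
  have hp0 : (p:ℝ) ≠ 0 := by positivity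
  rw [radInv_eq hp (Nat.le_add_left k t), Finset.sum_range_add]
  congr 1
  · rw [rev, Nat.cast_sum, Finset.sum_mul]
    apply Finset.sum_congr rfl
    intro j hj
    have hj' := Finset.mem_range.1 hj
    rw [digit_mod_pow (by omega : 0 < p) hj']
    push_cast
    rw [mul_assoc]
    congr 1
    generalize hs : t - 1 - j = s
    have ht : t = j + 1 + s := by omega
    rw [ht, pow_add ((p:ℝ)⁻¹) (j+1) s, mul_comm (((p:ℝ)⁻¹) ^ (j+1)), ← mul_assoc, ← mul_pow,
      mul_inv_cancel₀ hp0, one_pow, one_mul]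
  · rw [radInv_eq hp (Nat.div_le_self k (p ^ t)), Finset.mul_sum]
    apply Finset.sum_congr rfl
    intro j _
    rw [pow_add, ← Nat.div_div_eq_div_mul,
      show t + j + 1 = t + (j + 1) from by omega, pow_add]
    ring

lemma radInv_mem {p t c k : ℕ} (hp : 2 ≤ p) (hc : c < p ^ t) (hk : k % p ^ t = rev p t c) :
    (c:ℝ) * ((p:ℝ)⁻¹) ^ t ≤ radInv p k ∧ radInv p k < ((c:ℝ) + 1) * ((p:ℝ)⁻¹) ^ t := by
  have h := radInv_split hp t k
  rw [hk, rev_rev (by omega : 0 < p) t c hc] at h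
  have h1 : 0 ≤ radInv p (k / p ^ t) := radInv_nonneg _ _
  have h2 : radInv p (k / p ^ t) < 1 := radInv_lt_one hp _
  have h3 : (0:ℝ) < ((p:ℝ)⁻¹) ^ t := by positivity
  constructor <;> nlinarith

end HHaux


/-- Every open axis-parallel box in `[0,1]^d` containing no point of the
Halton–Hammersley set of `n` points has volume less than
`(2^{d-1} ∏_{i=1}^{d-1} p_i)/n`, where `p_i` is the `i`-th prime. -/
theorem stmt_10 (d n : ℕ) (hd : 2 ≤ d) (hn : 1 ≤ n)
    (a b : Fin d → ℝ) (hab : ∀ i, 0 ≤ a i ∧ a i < b i ∧ b i ≤ 1)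
    (hempty : ∀ k < n, ∃ i, ¬ (a i < halton d n k i ∧ halton d n k i < b i)) :
    ∏ i, (b i - a i) <
      (2 ^ (d - 1) * ∏ j ∈ Finset.range (d - 1), (Nat.nth Nat.Prime j : ℝ)) / n := by
  obtain ⟨m, rfl⟩ : ∃ m, d = m + 1 := ⟨d - 1, by omega⟩
  have hm : 1 ≤ m := by omega
  have hnR : (0:ℝ) < n := by exact_mod_cast hn
  set P : ℕ → ℕ := fun j => Nat.nth Nat.Prime j with hP
  have hPprime : ∀ j, (P j).Prime := fun j => Nat.prime_nth_prime j
  have hP2 : ∀ j, 2 ≤ P j := fun j => (hPprime j).two_le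
  set A : ℕ → ℝ := fun j => if h : j < m then a ⟨j+1, by omega⟩ else 0 with hA
  set B : ℕ → ℝ := fun j => if h : j < m then b ⟨j+1, by omega⟩ else 1 with hB
  have hABprop : ∀ j, 0 ≤ A j ∧ A j < B j ∧ B j ≤ 1 := by
    intro j
    by_cases h : j < m
    · simp only [hA, hB, dif_pos h]
      exact hab _
    · simp only [hA, hB, dif_neg h]
      norm_num
  have hex : ∀ j, ∃ t, 2 ≤ (B j - A j) * (P j : ℝ) ^ t := by
    intro j
    obtain ⟨h0, h1, h2⟩ := hABprop j
    have hBA : (0:ℝ) < B j - A j := by linarith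
    have hp1 : (1:ℝ) < (P j : ℝ) := by exact_mod_cast hP2 j
    obtain ⟨u, hu⟩ := pow_unbounded_of_one_lt (2 / (B j - A j)) hp1
    refine ⟨u, ?_⟩
    rw [div_lt_iff₀ hBA] at hu
    nlinarith
  set t : ℕ → ℕ := fun j => Nat.find (hex j) with htdef
  have ht1 : ∀ j, 2 ≤ (B j - A j) * (P j : ℝ) ^ (t j) := fun j => Nat.find_spec (hex j)
  have ht2 : ∀ j, (B j - A j) * (P j : ℝ) ^ (t j) < 2 * P j := by
    intro j
    obtain ⟨h0, h1, h2⟩ := hABprop j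
    have hBA : (0:ℝ) < B j - A j := by linarith
    have hpR : (1:ℝ) < (P j:ℝ) := by exact_mod_cast hP2 j
    have htpos : 1 ≤ t j := by
      by_contra h
      have h0' : t j = 0 := by omega
      have := ht1 j
      rw [h0'] at this
      simp at this
      nlinarith
    have he : t j = Nat.find (hex j) := congrFun htdef j
    have hmin := Nat.find_min (hex j) (m := t j - 1) (by omega)
    push_neg at hmin
    have hsplit : (P j:ℝ) ^ (t j) = (P j:ℝ) ^ (t j - 1) * P j := by
      rw [← pow_succ]
      congr 1
      omega
    rw [hsplit]
    nlinarith [pow_pos (by linarith : (0:ℝ) < (P j:ℝ)) (t j - 1)]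
  have hPt_pos : ∀ j, 0 < P j ^ t j := fun j => Nat.pow_pos (by have := hP2 j; omega)
  set c : ℕ → ℕ := fun j => ⌊A j * (P j:ℝ) ^ t j⌋₊ + 1 with hcdef
  have hApos : ∀ j, 0 ≤ A j * (P j:ℝ) ^ t j :=
    fun j => mul_nonneg (hABprop j).1 (by positivity)
  have hclow : ∀ j, A j * (P j:ℝ) ^ t j < c j := by
    intro j
    have := Nat.lt_floor_add_one (A j * (P j:ℝ) ^ t j)
    push_cast [hcdef]
    exact_mod_cast this
  have hchigh : ∀ j, (c j : ℝ) + 1 ≤ B j * (P j:ℝ) ^ t j := by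
    intro j
    have h1 : (⌊A j * (P j:ℝ) ^ t j⌋₊ : ℝ) ≤ A j * (P j:ℝ) ^ t j := Nat.floor_le (hApos j)
    have h2 := ht1 j
    push_cast [hcdef]
    nlinarith
  have hclt : ∀ j, c j < P j ^ t j := by
    intro j
    have h2 := (hABprop j).2.2
    have h3 := hchigh j
    have hpR : (0:ℝ) < (P j:ℝ) := by exact_mod_cast (by have := hP2 j; omega : 0 < P j)
    have hp : (0:ℝ) < (P j:ℝ) ^ t j := pow_pos hpR _
    have h4 : B j * (P j:ℝ) ^ t j ≤ (P j:ℝ) ^ t j := by nlinarith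
    have : (c j : ℝ) < ((P j ^ t j : ℕ) : ℝ) := by
      have hcast : ((P j ^ t j : ℕ) : ℝ) = (P j:ℝ) ^ t j := by push_cast; ring
      rw [hcast]
      linarith
    exact_mod_cast this
  set r : ℕ → ℕ := fun j => HHaux.rev (P j) (t j) (c j) with hrdef
  have hcop : Set.Pairwise ↑(Finset.range m) (Function.onFun Nat.Coprime fun j => P j ^ t j) := by
    intro i _ j _ hij
    have hne : P i ≠ P j := fun h => hij (Nat.nth_injective Nat.infinite_setOf_prime h)
    exact Nat.Coprime.pow _ _ ((Nat.coprime_primes (hPprime i) (hPprime j)).2 hne)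
  have hnz : ∀ j ∈ Finset.range m, P j ^ t j ≠ 0 := fun j _ => (hPt_pos j).ne'
  set s := Nat.chineseRemainderOfFinset r (fun j => P j ^ t j) (Finset.range m) hnz hcop
    with hsdef
  set M : ℕ := ∏ j ∈ Finset.range m, P j ^ t j with hM
  have hMpos : 0 < M := Finset.prod_pos (fun j hj => hPt_pos j)
  have hsltM : (s:ℕ) < M := Nat.chineseRemainderOfFinset_lt_prod r _ hnz hcop
  have key : ∀ k : ℕ, a 0 * n < (k:ℝ) → (k:ℝ) < b 0 * n → ¬ (k ≡ (s:ℕ) [MOD M]) := by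
    intro k hka hkb hcong
    have hb01 : b 0 ≤ 1 := (hab 0).2.2
    have hkn : k < n := by
      have : (k:ℝ) < n := by nlinarith
      exact_mod_cast this
    obtain ⟨i, hi⟩ := hempty k hkn
    apply hi
    by_cases hi0 : (i:ℕ) = 0
    · have hieq : i = 0 := Fin.ext (by simpa using hi0)
      subst hieq
      have hh : halton (m+1) n k 0 = (k:ℝ) / n := by simp [halton]
      rw [hh]
      constructor
      · rw [lt_div_iff₀ hnR]
        exact hka
      · rw [div_lt_iff₀ hnR]
        exact hkb
    · set j := (i:ℕ) - 1 with hj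
      have hjm : j < m := by have := i.isLt; omega
      have hmod : k ≡ r j [MOD P j ^ t j] := by
        have hdvd : P j ^ t j ∣ M := by
          rw [hM]
          exact Finset.dvd_prod_of_mem (fun j => P j ^ t j) (Finset.mem_range.2 hjm)
        have h1 : k ≡ (s:ℕ) [MOD P j ^ t j] := hcong.of_dvd hdvd
        exact h1.trans (s.2 j (Finset.mem_range.2 hjm))
      have hkmod : k % P j ^ t j = r j := by
        have := hmod
        unfold Nat.ModEq at this
        rw [this, Nat.mod_eq_of_lt (HHaux.rev_lt (by have := hP2 j; omega) _)]
      obtain ⟨hlo, hhi⟩ := HHaux.radInv_mem (hP2 j) (hclt j) hkmod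
      have hh : halton (m+1) n k i = radInv (P j) k := by
        simp [halton, hi0, hP, hj]
      have hiA : a i = A j ∧ b i = B j := by
        have hival : (i:ℕ) = j + 1 := by omega
        have : i = (⟨j+1, by omega⟩ : Fin (m+1)) := Fin.ext hival
        rw [this]
        constructor <;> simp [hA, hB, hjm]
      have hpR : (0:ℝ) < (P j:ℝ) := by exact_mod_cast (by have := hP2 j; omega : 0 < P j)
      have hpt : (0:ℝ) < (P j:ℝ) ^ t j := pow_pos hpR _
      have hinv : ((P j:ℝ)⁻¹) ^ t j = ((P j:ℝ) ^ t j)⁻¹ := inv_pow _ _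
      rw [hh, hiA.1, hiA.2]
      constructor
      · have : A j < (c j : ℝ) * ((P j:ℝ)⁻¹) ^ t j := by
          rw [hinv, ← div_eq_mul_inv, lt_div_iff₀ hpt]
          exact hclow j
        linarith
      · have : ((c j : ℝ) + 1) * ((P j:ℝ)⁻¹) ^ t j ≤ B j := by
          rw [hinv, ← div_eq_mul_inv, div_le_iff₀ hpt]
          exact hchigh j
        linarith
  have hgap : (b 0 - a 0) * n ≤ M := by
    by_contra hlt
    push_neg at hlt
    have ha0 : 0 ≤ a 0 := (hab 0).1
    have ha0b : a 0 < b 0 := (hab 0).2.1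
    have hb01 : b 0 ≤ 1 := (hab 0).2.2
    have hfind : ∃ u : ℕ, a 0 * n < (((s:ℕ) + M * u : ℕ) : ℝ) := by
      refine ⟨n, ?_⟩
      have h1 : (n:ℕ) ≤ (s:ℕ) + M * n := by
        calc n = 1 * n := (one_mul n).symm
          _ ≤ M * n := Nat.mul_le_mul_right n hMpos
          _ ≤ (s:ℕ) + M * n := Nat.le_add_left _ _
      have h2 : (n:ℝ) ≤ (((s:ℕ) + M * n : ℕ) : ℝ) := by exact_mod_cast h1
      nlinarith
    set u := Nat.find hfind with hu
    have huspec := Nat.find_spec hfind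
    have hcong : (s:ℕ) + M * u ≡ (s:ℕ) [MOD M] := by
      simp [Nat.ModEq, Nat.add_mul_mod_self_left]
    have hkb : (((s:ℕ) + M * u : ℕ):ℝ) < b 0 * n := by
      rcases Nat.eq_zero_or_pos u with h0 | h0
      · rw [h0, Nat.mul_zero, Nat.add_zero]
        have h1 : ((s:ℕ):ℝ) < (M:ℝ) := by exact_mod_cast hsltM
        nlinarith
      · have hmin := Nat.find_min hfind (m := u - 1) (by omega)
        push_neg at hmin
        have hksplit : (s:ℕ) + M * u = ((s:ℕ) + M * (u - 1)) + M := by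
          conv_lhs => rw [show u = (u - 1) + 1 from (Nat.succ_pred_eq_of_pos h0).symm]
          ring
        have h3 : (((s:ℕ) + M * u : ℕ):ℝ) = (((s:ℕ) + M * (u-1) : ℕ):ℝ) + (M:ℝ) := by
          rw [hksplit]; push_cast; ring
        rw [h3]
        nlinarith [hmin]
    exact key _ huspec hkb hcong
  -- final computation
  set Q : ℝ := ∏ j ∈ Finset.range m, (B j - A j) with hQ
  have hQpos : 0 < Q := Finset.prod_pos fun j _ => by have := hABprop j; linarith [this.2.1]
  have hprod : ∏ i, (b i - a i) = (b 0 - a 0) * Q := by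
    rw [Fin.prod_univ_succ]
    congr 1
    rw [hQ, ← Fin.prod_univ_eq_prod_range (fun j => B j - A j) m]
    apply Finset.prod_congr rfl
    intro i _
    have hi : (i:ℕ) < m := i.isLt
    simp [hA, hB, hi, Fin.succ]
  have step2 : (M:ℝ) * Q = ∏ j ∈ Finset.range m, ((P j:ℝ) ^ t j * (B j - A j)) := by
    rw [hM, hQ]
    push_cast
    rw [← Finset.prod_mul_distrib]
  have step3 : ∏ j ∈ Finset.range m, ((P j:ℝ) ^ t j * (B j - A j)) <
      ∏ j ∈ Finset.range m, (2 * (P j:ℝ)) := by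
    apply Finset.prod_lt_prod_of_nonempty
    · intro j _
      have := (hABprop j).2.1
      have hpR : (0:ℝ) < (P j:ℝ) := by exact_mod_cast (by have := hP2 j; omega : 0 < P j)
      have hpt : (0:ℝ) < (P j:ℝ) ^ t j := pow_pos hpR _
      nlinarith
    · intro j _
      have := ht2 j
      nlinarith [pow_pos (by exact_mod_cast (by have := hP2 j; omega : 0 < P j) : (0:ℝ) < (P j:ℝ)) (t j)]
    · exact Finset.nonempty_range_iff.2 (by omega)
  have step4 : ∏ j ∈ Finset.range m, (2 * (P j:ℝ)) =
      2 ^ m * ∏ j ∈ Finset.range m, (P j:ℝ) := by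
    rw [Finset.prod_mul_distrib, Finset.prod_const, Finset.card_range]
  have hba : b 0 - a 0 ≤ (M:ℝ) / n := by
    rw [le_div_iff₀ hnR]
    exact hgap
  have final : ∏ i, (b i - a i) < (2 ^ m * ∏ j ∈ Finset.range m, (P j:ℝ)) / n := by
    calc ∏ i, (b i - a i) = (b 0 - a 0) * Q := hprod
      _ ≤ (M:ℝ) / n * Q := mul_le_mul_of_nonneg_right hba hQpos.le
      _ = (M:ℝ) * Q / n := by ring
      _ < (2 ^ m * ∏ j ∈ Finset.range m, (P j:ℝ)) / n := by
          rw [div_lt_div_iff₀ hnR hnR]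
          apply mul_lt_mul_of_pos_right _ hnR
          rw [step2, ← step4]
          exact step3
  simpa [hP] using final
end

section
/- Fix a prime p, a positive integer q, and an integer t with 0 ≤ t < p^q such that t·p^{-q} = Σ_{j=0}^{q-1} b_j p^{-j-1} for digits b_j ∈ {0,...,p-1}. Then for a nonnegative integer k with base-p digits a_j, the radical-inverse value x(k) = Σ_{j≥0} a_j p^{-j-1} satisfies t·p^{-q} ≤ x(k) < (t+1)·p^{-q} if and only if k mod p^q = Σ_{j=0}^{q-1} b_j p^j. -/
namespace RadInvAux

open Finset

variable {p : ℕ}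

lemma sum_lt_pow (hp2 : 2 ≤ p) (q : ℕ) (c : ℕ → ℕ) (hc : ∀ j, j < q → c j < p) :
    ∑ j ∈ range q, c j * p ^ j < p ^ q := by
  induction q with
  | zero => simp
  | succ n ih =>
    rw [sum_range_succ, pow_succ]
    have h1 := ih (fun j hj => hc j (by omega))
    have h2 := hc n (by omega)
    calc ∑ j ∈ range n, c j * p ^ j + c n * p ^ n
        < p ^ n + c n * p ^ n := by omega
      _ = (1 + c n) * p ^ n := by ring
      _ ≤ p * p ^ n := Nat.mul_le_mul_right _ (by omega)
      _ = p ^ n * p := by ring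

lemma digit_extract (hp2 : 2 ≤ p) (q : ℕ) (c : ℕ → ℕ) (hc : ∀ j, j < q → c j < p)
    (i : ℕ) (hi : i < q) :
    (∑ j ∈ range q, c j * p ^ j) / p ^ i % p = c i := by
  have hsplit : ∑ j ∈ range q, c j * p ^ j
      = (∑ j ∈ range i, c j * p ^ j) + p ^ i * ∑ j ∈ range (q - i), c (i + j) * p ^ j := by
    have h2 : ∑ j ∈ Ico i q, c j * p ^ j
        = p ^ i * ∑ j ∈ range (q - i), c (i + j) * p ^ j := by
      rw [Finset.sum_Ico_eq_sum_range, Finset.mul_sum]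
      refine sum_congr rfl fun j hj => ?_
      rw [pow_add]; ring
    rw [range_eq_Ico, ← Finset.sum_Ico_consecutive _ (Nat.zero_le i) hi.le, h2]; simp only [range_eq_Ico]
  have hlt : ∑ j ∈ range i, c j * p ^ j < p ^ i :=
    sum_lt_pow hp2 i c (fun j hj => hc j (by omega))
  rw [hsplit, Nat.add_mul_div_left _ _ (pow_pos (by omega : 0 < p) i),
    Nat.div_eq_of_lt hlt, zero_add]
  obtain ⟨m, hm⟩ : ∃ m, q - i = m + 1 := ⟨q - i - 1, by omega⟩
  rw [hm, Finset.sum_range_succ']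
  have hterm : ∀ j, c (i + (j + 1)) * p ^ (j + 1) = p * (c (i + (j + 1)) * p ^ j) := by
    intro j; rw [pow_succ]; ring
  simp only [hterm, ← Finset.mul_sum, add_zero, pow_zero, mul_one]
  rw [Nat.mul_add_mod]
  exact Nat.mod_eq_of_lt (hc i hi)

lemma mod_pow_eq_sum (hp2 : 2 ≤ p) (k q : ℕ) :
    k % p ^ q = ∑ j ∈ range q, (k / p ^ j % p) * p ^ j := by
  induction q with
  | zero => simp [Nat.mod_one]
  | succ n ih =>
    rw [sum_range_succ, ← ih]
    -- k % p^{n+1} = k % p^n + (k / p^n % p) * p^n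
    have h1 : k % p ^ (n + 1)
        = (p ^ (n + 1) * (k / p ^ (n + 1)) + (k % p ^ n + k / p ^ n % p * p ^ n))
            % p ^ (n + 1) := by
      congr 1
      have e1 : p ^ n * (k / p ^ n) + k % p ^ n = k := Nat.div_add_mod k (p ^ n)
      have e2 : p * (k / p ^ n / p) + k / p ^ n % p = k / p ^ n := Nat.div_add_mod _ p
      have e3 : k / p ^ n / p = k / p ^ (n + 1) := by
        rw [Nat.div_div_eq_div_mul, ← pow_succ]
      calc k = p ^ n * (k / p ^ n) + k % p ^ n := e1.symm
        _ = p ^ n * (p * (k / p ^ n / p) + k / p ^ n % p) + k % p ^ n := by rw [e2]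
        _ = p ^ (n + 1) * (k / p ^ (n + 1)) + (k % p ^ n + k / p ^ n % p * p ^ n) := by
            rw [← e3]; ring
    have hlt : k % p ^ n + k / p ^ n % p * p ^ n < p ^ (n + 1) := by
      have h2 : k % p ^ n < p ^ n := Nat.mod_lt _ (pow_pos (by omega : 0 < p) n)
      have h3 : k / p ^ n % p < p := Nat.mod_lt _ (by omega)
      calc k % p ^ n + k / p ^ n % p * p ^ n
          < p ^ n + k / p ^ n % p * p ^ n := by omega
        _ = (1 + k / p ^ n % p) * p ^ n := by ring
        _ ≤ p * p ^ n := Nat.mul_le_mul_right _ (by omega)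
        _ = p ^ (n + 1) := by rw [pow_succ]; ring
    rw [h1, Nat.mul_add_mod, Nat.mod_eq_of_lt hlt]

lemma real_sum_eq (hp2 : 2 ≤ p) (N : ℕ) (c : ℕ → ℕ) :
    ∑ j ∈ range N, (c j : ℝ) * ((p:ℝ)⁻¹) ^ (j + 1)
      = ((∑ j ∈ range N, c j * p ^ (N - 1 - j) : ℕ) : ℝ) * ((p:ℝ) ^ N)⁻¹ := by
  have hp0 : (p:ℝ) ≠ 0 := by
    have : (0:ℝ) < p := by exact_mod_cast Nat.lt_of_lt_of_le two_pos hp2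
    exact ne_of_gt this
  push_cast
  rw [Finset.sum_mul]
  refine sum_congr rfl fun j hj => ?_
  have hj' : j < N := mem_range.mp hj
  have hN : (p:ℝ) ^ N = (p:ℝ) ^ (N - 1 - j) * (p:ℝ) ^ (j + 1) := by
    rw [← pow_add]; congr 1; omega
  have key : (p:ℝ) ^ (N - 1 - j) * ((p:ℝ) ^ N)⁻¹ = ((p:ℝ) ^ (j + 1))⁻¹ := by
    rw [hN, mul_inv, ← mul_assoc, mul_inv_cancel₀ (pow_ne_zero _ hp0), one_mul]
  rw [mul_assoc, key, inv_pow]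

lemma rev_sum_lt (hp2 : 2 ≤ p) (N : ℕ) (c : ℕ → ℕ) (hc : ∀ j, j < N → c j < p) :
    ∑ j ∈ range N, c j * p ^ (N - 1 - j) < p ^ N := by
  have h := sum_lt_pow hp2 N (fun j => c (N - 1 - j)) (fun j hj => hc _ (by omega))
  rw [← Finset.sum_range_reflect] at h
  calc ∑ j ∈ range N, c j * p ^ (N - 1 - j)
      = ∑ j ∈ range N, c (N - 1 - (N - 1 - j)) * p ^ (N - 1 - j) := by
        refine sum_congr rfl fun j hj => ?_
        have hj' : j < N := mem_range.mp hj
        have : N - 1 - (N - 1 - j) = j := by omega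
        rw [this]
    _ < p ^ N := h

lemma refl_sum (q : ℕ) (c : ℕ → ℕ) :
    ∑ j ∈ range q, c j * p ^ (q - 1 - j) = ∑ j ∈ range q, c (q - 1 - j) * p ^ j := by
  rw [← Finset.sum_range_reflect (fun j => c (q - 1 - j) * p ^ j)]
  refine sum_congr rfl fun j hj => ?_
  have hj' : j < q := mem_range.mp hj
  have : q - 1 - (q - 1 - j) = j := by omega
  rw [this]

end RadInvAux

open Finset RadInvAux in
/-- The radical-inverse value `x(k)` lies in the canonical interval
`[t·p^{-q}, (t+1)·p^{-q})` iff `k mod p^q = Σ_{j<q} b_j p^j`, where the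
digits `b_j ∈ {0,…,p-1}` satisfy `t·p^{-q} = Σ_{j<q} b_j p^{-j-1}`. -/
theorem stmt_11 (p q t : ℕ) (hp : p.Prime) (hq : 1 ≤ q) (ht : t < p ^ q)
    (b : ℕ → ℕ) (hb : ∀ j, b j < p)
    (htb : (t : ℝ) * ((p:ℝ) ^ q)⁻¹ =
      ∑ j ∈ Finset.range q, (b j : ℝ) * ((p:ℝ)⁻¹) ^ (j + 1))
    (k : ℕ) :
    ((t : ℝ) * ((p:ℝ) ^ q)⁻¹ ≤ radInv p k ∧
        radInv p k < ((t : ℝ) + 1) * ((p:ℝ) ^ q)⁻¹) ↔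
      k % p ^ q = ∑ j ∈ Finset.range q, b j * p ^ j := by
  have hp2 : 2 ≤ p := hp.two_le
  have hp0R : (0:ℝ) < p := by exact_mod_cast Nat.lt_of_lt_of_le two_pos hp2
  have hpq0 : (0:ℝ) < (p:ℝ) ^ q := pow_pos hp0R q
  set d : ℕ → ℕ := fun j => k / p ^ j % p with hd_def
  have hdlt : ∀ j, d j < p := fun j => Nat.mod_lt _ (by omega)
  set n := max k q with hn
  -- extend the sum to range n
  have hext : radInv p k = ∑ j ∈ Finset.range n, (d j : ℝ) * ((p:ℝ)⁻¹) ^ (j + 1) := by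
    unfold radInv
    refine Finset.sum_subset (Finset.range_subset_range.mpr (le_max_left k q)) ?_
    intro j _ hjk
    have hkj : k ≤ j := by simpa using hjk
    have hklt : k < p ^ j := by
      calc k < 2 ^ k := Nat.lt_two_pow_self
        _ ≤ 2 ^ j := Nat.pow_le_pow_right (by omega) hkj
        _ ≤ p ^ j := Nat.pow_le_pow_left hp2 j
    have : k / p ^ j = 0 := Nat.div_eq_of_lt hklt
    simp [hd_def, this]
  have hsplit : radInv p k
      = (∑ j ∈ Finset.range q, (d j : ℝ) * ((p:ℝ)⁻¹) ^ (j + 1))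
        + ∑ j ∈ Finset.Ico q n, (d j : ℝ) * ((p:ℝ)⁻¹) ^ (j + 1) := by
    rw [hext, Finset.range_eq_Ico,
      ← Finset.sum_Ico_consecutive _ (Nat.zero_le q) (le_max_right k q), ← Finset.range_eq_Ico]
  set rev := ∑ j ∈ Finset.range q, d j * p ^ (q - 1 - j) with hrev
  have hhead : ∑ j ∈ Finset.range q, (d j : ℝ) * ((p:ℝ)⁻¹) ^ (j + 1)
      = (rev : ℝ) * ((p:ℝ) ^ q)⁻¹ := real_sum_eq hp2 q d
  set T := ∑ j ∈ Finset.Ico q n, (d j : ℝ) * ((p:ℝ)⁻¹) ^ (j + 1) with hT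
  have hT0 : 0 ≤ T := Finset.sum_nonneg fun j _ => by positivity
  have hT1 : T < ((p:ℝ) ^ q)⁻¹ := by
    have hTe : T = (∑ j ∈ Finset.range (n - q), (d (q + j) : ℝ) * ((p:ℝ)⁻¹) ^ (j + 1))
        * ((p:ℝ) ^ q)⁻¹ := by
      rw [hT, Finset.sum_Ico_eq_sum_range, Finset.sum_mul]
      refine Finset.sum_congr rfl fun j hj => ?_
      rw [mul_assoc]
      congr 1
      rw [← inv_pow, ← pow_add]
      congr 1
      omega
    rw [hTe]
    have hlt1 : (∑ j ∈ Finset.range (n - q), (d (q + j) : ℝ) * ((p:ℝ)⁻¹) ^ (j + 1)) < 1 := by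
      rw [real_sum_eq hp2 (n - q) (fun j => d (q + j))]
      have hS := rev_sum_lt hp2 (n - q) (fun j => d (q + j)) (fun j _ => hdlt _)
      have hSR : ((∑ j ∈ Finset.range (n - q), d (q + j) * p ^ (n - q - 1 - j) : ℕ) : ℝ)
          < (p:ℝ) ^ (n - q) := by exact_mod_cast hS
      rw [mul_inv_lt_iff₀ (pow_pos hp0R _), one_mul]
      exact hSR
    calc (∑ j ∈ Finset.range (n - q), (d (q + j) : ℝ) * ((p:ℝ)⁻¹) ^ (j + 1)) * ((p:ℝ) ^ q)⁻¹
        < 1 * ((p:ℝ) ^ q)⁻¹ := by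
          apply mul_lt_mul_of_pos_right hlt1 (inv_pos.mpr hpq0)
      _ = ((p:ℝ) ^ q)⁻¹ := one_mul _
  -- condition iff rev = t
  have hiff1 : ((t : ℝ) * ((p:ℝ) ^ q)⁻¹ ≤ radInv p k ∧
      radInv p k < ((t : ℝ) + 1) * ((p:ℝ) ^ q)⁻¹) ↔ rev = t := by
    rw [hsplit, hhead]
    constructor
    · rintro ⟨h1, h2⟩
      have l1 : (t:ℝ) * ((p:ℝ) ^ q)⁻¹ < ((rev:ℝ) + 1) * ((p:ℝ) ^ q)⁻¹ := by
        calc (t:ℝ) * ((p:ℝ) ^ q)⁻¹ ≤ (rev:ℝ) * ((p:ℝ) ^ q)⁻¹ + T := h1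
          _ < (rev:ℝ) * ((p:ℝ) ^ q)⁻¹ + ((p:ℝ) ^ q)⁻¹ := by linarith
          _ = ((rev:ℝ) + 1) * ((p:ℝ) ^ q)⁻¹ := by ring
      have l2 : (rev:ℝ) * ((p:ℝ) ^ q)⁻¹ < ((t:ℝ) + 1) * ((p:ℝ) ^ q)⁻¹ := by
        calc (rev:ℝ) * ((p:ℝ) ^ q)⁻¹ ≤ (rev:ℝ) * ((p:ℝ) ^ q)⁻¹ + T := by linarith
          _ < ((t:ℝ) + 1) * ((p:ℝ) ^ q)⁻¹ := h2
      have l1' : (t:ℝ) < (rev:ℝ) + 1 := (mul_lt_mul_iff_of_pos_right (inv_pos.mpr hpq0)).mp l1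
      have l2' : (rev:ℝ) < (t:ℝ) + 1 := (mul_lt_mul_iff_of_pos_right (inv_pos.mpr hpq0)).mp l2
      have n1 : t < rev + 1 := by exact_mod_cast l1'
      have n2 : rev < t + 1 := by exact_mod_cast l2'
      omega
    · intro h
      rw [h]
      constructor
      · linarith
      · have : ((t:ℝ) + 1) * ((p:ℝ) ^ q)⁻¹ = (t:ℝ) * ((p:ℝ) ^ q)⁻¹ + ((p:ℝ) ^ q)⁻¹ := by ring
        linarith [this]
  -- t = Σ b j p^{q-1-j}
  have htb' : t = ∑ j ∈ Finset.range q, b j * p ^ (q - 1 - j) := by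
    rw [real_sum_eq hp2 q b] at htb
    have := mul_right_cancel₀ (inv_ne_zero (ne_of_gt hpq0)) htb
    exact_mod_cast this
  -- rev = Σ b j p^{q-1-j} ↔ k % p^q = Σ b j p^j
  have hiff2 : rev = ∑ j ∈ Finset.range q, b j * p ^ (q - 1 - j)
      ↔ k % p ^ q = ∑ j ∈ Finset.range q, b j * p ^ j := by
    constructor
    · intro h
      have h' : ∑ j ∈ Finset.range q, d (q - 1 - j) * p ^ j
          = ∑ j ∈ Finset.range q, b (q - 1 - j) * p ^ j := by
        rw [← refl_sum q d, ← refl_sum q b]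
        exact h
      have hdig : ∀ i, i < q → d i = b i := by
        intro i hi
        have hc := congrArg (fun N => N / p ^ (q - 1 - i) % p) h'
        rw [digit_extract hp2 q _ (fun j _ => hdlt _) _ (by omega),
          digit_extract hp2 q _ (fun j _ => hb _) _ (by omega)] at hc
        have e : q - 1 - (q - 1 - i) = i := by omega
        rwa [e] at hc
      rw [mod_pow_eq_sum hp2 k q]
      exact Finset.sum_congr rfl fun j hj =>
        congrArg (fun x => x * p ^ j) (hdig j (Finset.mem_range.mp hj))
    · intro h
      refine Finset.sum_congr rfl fun j hj => ?_
      have hj' : j < q := Finset.mem_range.mp hj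
      have h1 : d j = (k % p ^ q) / p ^ j % p := by
        rw [mod_pow_eq_sum hp2 k q, digit_extract hp2 q d (fun _ _ => hdlt _) j hj']
      have h2 : d j = b j := by
        rw [h1, h, digit_extract hp2 q b (fun _ _ => hb _) j hj']
      exact congrArg (fun x => x * p ^ (q - 1 - j)) h2
  rw [hiff1, htb']
  exact hiff2
end

section
/- Let d ≥ 2 and let n_1, ..., n_d be integers with each n_i ≥ 2, and n = Σ n_i. Then there exists a set of n points in R^d such that the number of maximal empty open axis-parallel boxes in R^d (boxes containing no point of the set, maximal with respect to inclusion among such boxes) is at least ∏_{i=1}^d (n_i - 1). -/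
set_option linter.unusedSectionVars false
set_option linter.unusedVariables false
set_option maxHeartbeats 1000000


/-- An (open) axis-parallel box in `ℝ^d`, where intervals may be unbounded:
a product of open intervals with extended-real endpoints. -/
def IsOpenBox {d : ℕ} (B : Set (Fin d → ℝ)) : Prop :=
  ∃ l u : Fin d → EReal, B = {x | ∀ i, l i < (x i : EReal) ∧ (x i : EReal) < u i}

namespace Stmt19
variable {d : ℕ} [NeZero d]

def pt (nv : Fin d → ℕ) (i : Fin d) (k : ℕ) : Fin d → ℝ :=
  fun j => if j = i then (k : ℝ) else if j = i + 1 then (nv j : ℝ) + k else (nv j : ℝ)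

lemma succ_ne (hd : 2 ≤ d) (i : Fin d) : i + 1 ≠ i := by
  intro h
  have h1 : (1 : Fin d) = 0 := add_left_cancel (by simpa using h : i + 1 = i + 0)
  rw [Fin.one_eq_zero_iff] at h1; omega

lemma pt_self (nv : Fin d → ℕ) (i : Fin d) (k : ℕ) : pt nv i k i = k := if_pos rfl

lemma pt_succ (hd : 2 ≤ d) (nv : Fin d → ℕ) (i : Fin d) (k : ℕ) :
    pt nv i k (i + 1) = (nv (i + 1) : ℝ) + k := by
  rw [pt, if_neg (succ_ne hd i), if_pos rfl]

lemma pt_other (nv : Fin d → ℕ) {i j : Fin d} (k : ℕ) (h1 : j ≠ i) (h2 : j ≠ i + 1) :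
    pt nv i k j = nv j := by
  rw [pt, if_neg h1, if_neg h2]

noncomputable def ptS (nv : Fin d → ℕ) : Finset (Fin d → ℝ) :=
  (Finset.univ.sigma (fun i : Fin d => Finset.Icc 1 (nv i))).image (fun s => pt nv s.1 s.2)

lemma mem_ptS (nv : Fin d → ℕ) (x : Fin d → ℝ) :
    x ∈ ptS nv ↔ ∃ i k, 1 ≤ k ∧ k ≤ nv i ∧ pt nv i k = x := by
  simp only [ptS, Finset.mem_image, Finset.mem_sigma, Finset.mem_univ, Finset.mem_Icc, true_and]
  constructor
  · rintro ⟨⟨i, k⟩, ⟨h1, h2⟩, rfl⟩; exact ⟨i, k, h1, h2, rfl⟩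
  · rintro ⟨i, k, h1, h2, rfl⟩; exact ⟨⟨i, k⟩, ⟨h1, h2⟩, rfl⟩

lemma card_ptS (hd : 2 ≤ d) (nv : Fin d → ℕ) : (ptS nv).card = ∑ i, nv i := by
  rw [ptS, Finset.card_image_of_injOn]
  · rw [Finset.card_sigma]
    simp [Nat.card_Icc]
  · rintro ⟨i, k⟩ hik ⟨i', k'⟩ hik' heq
    simp only [Finset.mem_coe, Finset.mem_sigma, Finset.mem_univ, Finset.mem_Icc, true_and] at hik hik'
    rcases eq_or_ne i i' with rfl | hne
    · have := congrFun heq i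
      dsimp only at this
      rw [pt_self, pt_self] at this
      have : k = k' := by exact_mod_cast this
      subst this; rfl
    · exfalso
      have := congrFun heq (i' + 1)
      dsimp only at this
      rw [pt_succ hd nv i' k'] at this
      rcases eq_or_ne (i' + 1) i with h | h
      · rw [h, pt_self] at this
        have hk : (k : ℝ) ≤ nv i := by exact_mod_cast hik.2
        have hk' : (1 : ℝ) ≤ (k' : ℕ) := by exact_mod_cast hik'.1
        linarith
      · have h2 : i' + 1 ≠ i + 1 := fun hh => hne (add_right_cancel hh).symm
        rw [pt_other nv k h h2] at this
        have hk' : (1 : ℝ) ≤ (k' : ℕ) := by exact_mod_cast hik'.1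
        linarith

def ub (nv a : Fin d → ℕ) (j : Fin d) : ℝ := (nv j : ℝ) + 1 + (a (j - 1) : ℝ)

def Rbox (nv a : Fin d → ℕ) : Set (Fin d → ℝ) :=
  {x | ∀ j, (a j : ℝ) < x j ∧ x j < ub nv a j}

def Good (nv a : Fin d → ℕ) : Prop := ∀ i, 1 ≤ a i ∧ a i + 1 ≤ nv i

lemma Rbox_empty (hd : 2 ≤ d) (nv a : Fin d → ℕ) (ha : Good nv a) :
    Rbox nv a ∩ ↑(ptS nv) = ∅ := by
  ext x
  simp only [Set.mem_inter_iff, Set.mem_empty_iff_false, iff_false, not_and]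
  intro hx hS
  rw [Finset.mem_coe, mem_ptS] at hS
  obtain ⟨i, k, hk1, hk2, rfl⟩ := hS
  have h1 := (hx i).1
  rw [pt_self] at h1
  have h2 := (hx (i + 1)).2
  rw [pt_succ hd nv i k] at h2
  rw [ub, add_sub_cancel_right] at h2
  have hai : (a i : ℝ) < k := h1
  have : (k : ℝ) < 1 + a i := by linarith
  have h3 : a i < k := by exact_mod_cast hai
  have h4 : k < 1 + a i := by exact_mod_cast this
  omega


lemma ub_ge (nv a : Fin d → ℕ) (ha : Good nv a) (j : Fin d) : (nv j : ℝ) + 2 ≤ ub nv a j := by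
  have h1 := (ha (j - 1)).1
  have h2 : (1 : ℝ) ≤ (a (j - 1) : ℕ) := by exact_mod_cast h1
  rw [ub]; linarith

lemma a_lt_nv (nv a : Fin d → ℕ) (ha : Good nv a) (j : Fin d) : (a j : ℝ) < nv j := by
  have := (ha j).2
  exact_mod_cast Nat.lt_of_succ_le this

lemma update_center_mem (nv a : Fin d → ℕ) (ha : Good nv a) (i : Fin d) (t : ℝ)
    (h1 : (a i : ℝ) < t) (h2 : t < ub nv a i) :
    Function.update (fun j => (nv j : ℝ)) i t ∈ Rbox nv a := by
  intro j
  rcases eq_or_ne j i with rfl | hj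
  · simpa using ⟨h1, h2⟩
  · rw [Function.update_of_ne hj]
    refine ⟨a_lt_nv nv a ha j, ?_⟩
    have := ub_ge nv a ha j
    linarith

lemma center_mem (nv a : Fin d → ℕ) (ha : Good nv a) :
    (fun j => (nv j : ℝ)) ∈ Rbox nv a := by
  intro j
  refine ⟨a_lt_nv nv a ha j, ?_⟩
  have := ub_ge nv a ha j
  linarith

lemma Rbox_isOpenBox (nv a : Fin d → ℕ) : IsOpenBox (Rbox nv a) := by
  refine ⟨fun i => ((a i : ℝ) : EReal), fun i => ((ub nv a i : ℝ) : EReal), ?_⟩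
  ext x
  simp only [Rbox, Set.mem_setOf_eq, EReal.coe_lt_coe_iff]

lemma Rbox_maximal (hd : 2 ≤ d) (nv a : Fin d → ℕ) (ha : Good nv a)
    (B' : Set (Fin d → ℝ)) (hB' : IsOpenBox B') (hemp : B' ∩ ↑(ptS nv) = ∅)
    (hsub : Rbox nv a ⊆ B') : B' = Rbox nv a := by
  obtain ⟨l, u, rfl⟩ := hB'
  have hub_gt_a : ∀ j, (a j : ℝ) < ub nv a j := by
    intro j; have h1 := a_lt_nv nv a ha j; have h2 := ub_ge nv a ha j; linarith
  have hmemB' : ∀ x ∈ Rbox nv a, ∀ j, l j < (x j : EReal) ∧ (x j : EReal) < u j :=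
    fun x hx => hsub hx
  -- Step A : l j ≤ a j
  have hA : ∀ j, l j ≤ ((a j : ℝ) : EReal) := by
    intro j
    by_contra h
    push_neg at h
    have hm : ((a j : ℝ) : EReal) < min (l j) ((((a j : ℝ) + 1) : ℝ) : EReal) := by
      refine lt_min h ?_
      exact_mod_cast (by linarith : (a j : ℝ) < (a j : ℝ) + 1)
    obtain ⟨t, ht1, ht2⟩ := EReal.exists_between_coe_real hm
    have ht1' : (a j : ℝ) < t := by exact_mod_cast ht1
    have htl : (t : EReal) < l j := lt_of_lt_of_le ht2 (min_le_left _ _)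
    have htub : t < ub nv a j := by
      have h4 : (t : EReal) < ((((a j : ℝ) + 1) : ℝ) : EReal) :=
        lt_of_lt_of_le ht2 (min_le_right _ _)
      have h5 : t < (a j : ℝ) + 1 := by exact_mod_cast h4
      have h7 : (a j : ℝ) + 1 ≤ nv j := by exact_mod_cast (ha j).2
      have h8 := ub_ge nv a ha j
      linarith
    have hx := hmemB' _ (update_center_mem nv a ha j t ht1' htub) j
    rw [Function.update_self] at hx
    exact absurd htl (lt_asymm hx.1)
  -- Step B : ub j ≤ u j
  have hB : ∀ j, ((ub nv a j : ℝ) : EReal) ≤ u j := by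
    intro j
    by_contra h
    push_neg at h
    have hm : max (u j) (((a j : ℝ)) : EReal) < ((ub nv a j : ℝ) : EReal) := by
      refine max_lt h ?_
      exact_mod_cast hub_gt_a j
    obtain ⟨t, ht1, ht2⟩ := EReal.exists_between_coe_real hm
    have hta : (a j : ℝ) < t := by exact_mod_cast lt_of_le_of_lt (le_max_right _ _) ht1
    have htu : u j < (t : EReal) := lt_of_le_of_lt (le_max_left _ _) ht1
    have htub : t < ub nv a j := by exact_mod_cast ht2
    have hx := hmemB' _ (update_center_mem nv a ha j t hta htub) j
    rw [Function.update_self] at hx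
    exact absurd htu (lt_asymm hx.2)
  -- Step C : a j ≤ l j
  have hC : ∀ j, ((a j : ℝ) : EReal) ≤ l j := by
    intro j
    by_contra h
    push_neg at h
    have hptS : pt nv j (a j) ∈ ptS nv := by
      rw [mem_ptS]
      exact ⟨j, a j, (ha j).1, by have := (ha j).2; omega, rfl⟩
    have hptB : ∀ j', l j' < (pt nv j (a j) j' : EReal) ∧ (pt nv j (a j) j' : EReal) < u j' := by
      intro j'
      rcases eq_or_ne j' j with rfl | hj1
      · rw [pt_self]
        refine ⟨h, lt_of_lt_of_le ?_ (hB j')⟩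
        exact_mod_cast hub_gt_a j'
      rcases eq_or_ne j' (j + 1) with rfl | hj2
      · rw [pt_succ hd nv j (a j)]
        constructor
        · refine lt_of_le_of_lt (hA (j + 1)) ?_
          rw [EReal.coe_lt_coe_iff]
          have h1 := a_lt_nv nv a ha (j + 1)
          have h2 : (0 : ℝ) ≤ (a j : ℕ) := Nat.cast_nonneg _
          linarith
        · refine lt_of_lt_of_le ?_ (hB (j + 1))
          rw [EReal.coe_lt_coe_iff, ub, add_sub_cancel_right]
          linarith
      · rw [pt_other nv (a j) hj1 hj2]
        constructor
        · refine lt_of_le_of_lt (hA j') ?_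
          exact_mod_cast a_lt_nv nv a ha j'
        · refine lt_of_lt_of_le ?_ (hB j')
          rw [EReal.coe_lt_coe_iff]
          have := ub_ge nv a ha j'
          linarith
    have hcontr : pt nv j (a j) ∈ ({x | ∀ i, l i < (x i : EReal) ∧ (x i : EReal) < u i}
        ∩ ↑(ptS nv)) := ⟨hptB, hptS⟩
    rw [hemp] at hcontr
    exact hcontr
  -- Step D : u j ≤ ub j
  have hD : ∀ j, u j ≤ ((ub nv a j : ℝ) : EReal) := by
    intro j
    by_contra h
    push_neg at h
    set i := j - 1 with hi
    have hij : i + 1 = j := sub_add_cancel j 1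
    have hji : j ≠ i := by
      intro hh
      exact succ_ne hd i (by rw [hij, ← hh])
    have hptS : pt nv i (a i + 1) ∈ ptS nv := by
      rw [mem_ptS]
      exact ⟨i, a i + 1, by omega, (ha i).2, rfl⟩
    have hvj : pt nv i (a i + 1) j = (nv j : ℝ) + ((a i + 1 : ℕ) : ℝ) := by
      rw [← hij, pt_succ hd nv i (a i + 1)]
    have hubj : (nv j : ℝ) + ((a i + 1 : ℕ) : ℝ) = ub nv a j := by
      rw [ub, ← hi]
      push_cast
      ring
    have hptB : ∀ j', l j' < (pt nv i (a i + 1) j' : EReal) ∧ (pt nv i (a i + 1) j' : EReal) < u j' := by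
      intro j'
      rcases eq_or_ne j' j with hj1 | hj1
      · rw [hj1, hvj, hubj]
        constructor
        · refine lt_of_le_of_lt (hA j) ?_
          rw [EReal.coe_lt_coe_iff]
          exact hub_gt_a j
        · exact h
      rcases eq_or_ne j' i with hj2 | hj2
      · rw [hj2, pt_self]
        constructor
        · refine lt_of_le_of_lt (hA i) ?_
          rw [EReal.coe_lt_coe_iff]
          push_cast
          linarith
        · refine lt_of_lt_of_le ?_ (hB i)
          rw [EReal.coe_lt_coe_iff]
          have h1 : ((a i : ℕ) : ℝ) + 1 ≤ nv i := by exact_mod_cast (ha i).2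
          have h2 := ub_ge nv a ha i
          push_cast
          linarith
      · have hj3 : j' ≠ i + 1 := by rw [hij]; exact hj1
        rw [pt_other nv (a i + 1) hj2 hj3]
        constructor
        · refine lt_of_le_of_lt (hA j') ?_
          exact_mod_cast a_lt_nv nv a ha j'
        · refine lt_of_lt_of_le ?_ (hB j')
          rw [EReal.coe_lt_coe_iff]
          have := ub_ge nv a ha j'
          linarith
    have hcontr : pt nv i (a i + 1) ∈ ({x | ∀ i, l i < (x i : EReal) ∧ (x i : EReal) < u i}
        ∩ ↑(ptS nv)) := ⟨hptB, hptS⟩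
    rw [hemp] at hcontr
    exact hcontr
  have hl : ∀ j, l j = ((a j : ℝ) : EReal) := fun j => le_antisymm (hA j) (hC j)
  have hu : ∀ j, u j = ((ub nv a j : ℝ) : EReal) := fun j => le_antisymm (hD j) (hB j)
  ext x
  simp only [Set.mem_setOf_eq, hl, hu, EReal.coe_lt_coe_iff]
  rfl


lemma finite_maxboxes (S : Finset (Fin d → ℝ))
    (hex : ∃ W : Set (Fin d → ℝ), IsOpenBox W ∧ W ∩ ↑S = ∅ ∧ W.Nonempty) :
    {B : Set (Fin d → ℝ) | IsOpenBox B ∧ (B ∩ ↑S = ∅) ∧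
      ∀ B' : Set (Fin d → ℝ), IsOpenBox B' → (B' ∩ ↑S = ∅) → B ⊆ B' →
        B' = B}.Finite := by
  classical
  set V : Set EReal :=
    insert ⊥ (insert ⊤ (⋃ i : Fin d, (fun x : Fin d → ℝ => ((x i : ℝ) : EReal)) '' ↑S)) with hV
  have hVfin : V.Finite := by
    apply Set.Finite.insert
    apply Set.Finite.insert
    apply Set.finite_iUnion
    intro i
    exact (S.finite_toSet).image _
  have hDfin : {lu : (Fin d → EReal) × (Fin d → EReal) |
      (∀ i, lu.1 i ∈ V) ∧ (∀ i, lu.2 i ∈ V)}.Finite := by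
    have h1 : {f : Fin d → EReal | ∀ i, f i ∈ V}.Finite := by
      have h2 := Set.Finite.pi (fun _ : Fin d => hVfin)
      convert h2 using 1
      ext f
      simp [Set.mem_pi]
    apply Set.Finite.subset (h1.prod h1)
    rintro ⟨l, u⟩ ⟨h2, h3⟩
    exact ⟨h2, h3⟩
  apply Set.Finite.subset (hDfin.image (fun lu =>
    {x : Fin d → ℝ | ∀ i, lu.1 i < (x i : EReal) ∧ (x i : EReal) < lu.2 i}))
  rintro B ⟨⟨l, u, hBlu⟩, hemp, hmax⟩
  -- B is nonempty
  have hne : B.Nonempty := by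
    rcases Set.eq_empty_or_nonempty B with he | hne
    · exfalso
      obtain ⟨W, hW1, hW2, hW3⟩ := hex
      have hWB := hmax W hW1 hW2 (by rw [he]; exact Set.empty_subset _)
      rw [hWB, he] at hW3
      exact Set.not_nonempty_empty hW3
    · exact hne
  obtain ⟨x0, hx0mem⟩ := hne
  have hx0 : ∀ j, l j < (x0 j : EReal) ∧ (x0 j : EReal) < u j := by
    rw [hBlu] at hx0mem; exact hx0mem
  have hnotmem : ∀ s ∈ S, s ∉ B := by
    intro s hs hsB
    have h1 : s ∈ B ∩ ↑S := ⟨hsB, hs⟩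
    rw [hemp] at h1
    exact h1
  have hkey : ∀ i, l i ∈ V ∧ u i ∈ V := by
    intro i
    have hlu : l i < u i := lt_trans (hx0 i).1 (hx0 i).2
    constructor
    · by_contra hli
      have hlb : l i ≠ ⊥ := fun hh => hli (hh ▸ Set.mem_insert _ _)
      have hlt : l i ≠ ⊤ := (lt_of_lt_of_le hlu le_top).ne
      obtain ⟨c, hc⟩ : ∃ c : ℝ, l i = (c : EReal) :=
        ⟨(l i).toReal, (EReal.coe_toReal hlt hlb).symm⟩
      set T : Set EReal := {v ∈ V | v < l i} with hT
      have hTfin : T.Finite := hVfin.subset (Set.sep_subset _ _)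
      have hTne : T.Nonempty := ⟨⊥, Set.mem_insert _ _, bot_lt_iff_ne_bot.2 hlb⟩
      obtain ⟨m, hmT, hmmax⟩ := Set.exists_max_image T id hTfin hTne
      have hm_lt : m < l i := hmT.2
      set B'' : Set (Fin d → ℝ) :=
        {x | ∀ j, Function.update l i m j < (x j : EReal) ∧ (x j : EReal) < u j} with hB''
      have hopen : IsOpenBox B'' := ⟨Function.update l i m, u, rfl⟩
      have hsub : B ⊆ B'' := by
        intro x hx
        rw [hBlu] at hx
        intro j
        rcases eq_or_ne j i with rfl | hj
        · rw [Function.update_self]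
          exact ⟨lt_trans hm_lt (hx j).1, (hx j).2⟩
        · rw [Function.update_of_ne hj]
          exact hx j
      have hem : B'' ∩ ↑S = ∅ := by
        ext s
        simp only [Set.mem_inter_iff, Set.mem_empty_iff_false, iff_false, not_and]
        intro hsB'' hsS
        rw [Finset.mem_coe] at hsS
        have h1 : (s i : EReal) ∈ V := by
          rw [hV]
          exact Set.mem_insert_of_mem _ (Set.mem_insert_of_mem _
            (Set.mem_iUnion.mpr ⟨i, ⟨s, hsS, rfl⟩⟩))
        have h3 : ¬ (l i < (s i : EReal)) := by
          intro h4
          apply hnotmem s hsS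
          rw [hBlu]
          intro j
          rcases eq_or_ne j i with rfl | hj
          · exact ⟨h4, (hsB'' j).2⟩
          · have h5 := hsB'' j
            rwa [Function.update_of_ne hj] at h5
        have h5 : (s i : EReal) ≤ l i := not_lt.1 h3
        have h6 : (s i : EReal) ≠ l i := fun hh => hli (hh ▸ h1)
        have h7 : (s i : EReal) ∈ T := ⟨h1, lt_of_le_of_ne h5 h6⟩
        have h8 := hmmax _ h7
        have h9 := (hsB'' i).1
        rw [Function.update_self] at h9
        exact absurd h9 (not_lt.2 h8)
      have heq := hmax B'' hopen hem hsub
      have hx' : Function.update x0 i c ∈ B'' := by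
        intro j
        rcases eq_or_ne j i with rfl | hj
        · rw [Function.update_self, Function.update_self]
          exact ⟨hc ▸ hm_lt, hc ▸ hlu⟩
        · rw [Function.update_of_ne hj, Function.update_of_ne hj]
          exact hx0 j
      rw [heq, hBlu] at hx'
      have h10 := (hx' i).1
      rw [Function.update_self, ← hc] at h10
      exact lt_irrefl _ h10
    · by_contra hui
      have hut : u i ≠ ⊤ := fun hh => hui (hh ▸ Set.mem_insert_of_mem _ (Set.mem_insert _ _))
      have hub : u i ≠ ⊥ := (lt_of_le_of_lt bot_le hlu).ne'
      obtain ⟨c, hc⟩ : ∃ c : ℝ, u i = (c : EReal) :=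
        ⟨(u i).toReal, (EReal.coe_toReal hut hub).symm⟩
      set T : Set EReal := {v ∈ V | u i < v} with hT
      have hTfin : T.Finite := hVfin.subset (Set.sep_subset _ _)
      have hTne : T.Nonempty := ⟨⊤, Set.mem_insert_of_mem _ (Set.mem_insert _ _),
        lt_top_iff_ne_top.2 hut⟩
      obtain ⟨m, hmT, hmmin⟩ := Set.exists_min_image T id hTfin hTne
      have hm_gt : u i < m := hmT.2
      set B'' : Set (Fin d → ℝ) :=
        {x | ∀ j, l j < (x j : EReal) ∧ (x j : EReal) < Function.update u i m j} with hB''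
      have hopen : IsOpenBox B'' := ⟨l, Function.update u i m, rfl⟩
      have hsub : B ⊆ B'' := by
        intro x hx
        rw [hBlu] at hx
        intro j
        rcases eq_or_ne j i with rfl | hj
        · rw [Function.update_self]
          exact ⟨(hx j).1, lt_trans (hx j).2 hm_gt⟩
        · rw [Function.update_of_ne hj]
          exact hx j
      have hem : B'' ∩ ↑S = ∅ := by
        ext s
        simp only [Set.mem_inter_iff, Set.mem_empty_iff_false, iff_false, not_and]
        intro hsB'' hsS
        rw [Finset.mem_coe] at hsS
        have h1 : (s i : EReal) ∈ V := by
          rw [hV]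
          exact Set.mem_insert_of_mem _ (Set.mem_insert_of_mem _
            (Set.mem_iUnion.mpr ⟨i, ⟨s, hsS, rfl⟩⟩))
        have h3 : ¬ ((s i : EReal) < u i) := by
          intro h4
          apply hnotmem s hsS
          rw [hBlu]
          intro j
          rcases eq_or_ne j i with rfl | hj
          · exact ⟨(hsB'' j).1, h4⟩
          · have h5 := hsB'' j
            rwa [Function.update_of_ne hj] at h5
        have h5 : u i ≤ (s i : EReal) := not_lt.1 h3
        have h6 : (s i : EReal) ≠ u i := fun hh => hui (hh ▸ h1)
        have h7 : (s i : EReal) ∈ T := ⟨h1, lt_of_le_of_ne h5 (Ne.symm h6)⟩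
        have h8 := hmmin _ h7
        have h9 := (hsB'' i).2
        rw [Function.update_self] at h9
        exact absurd h9 (not_lt.2 h8)
      have heq := hmax B'' hopen hem hsub
      have hx' : Function.update x0 i c ∈ B'' := by
        intro j
        rcases eq_or_ne j i with rfl | hj
        · rw [Function.update_self, Function.update_self]
          exact ⟨hc ▸ hlu, hc ▸ hm_gt⟩
        · rw [Function.update_of_ne hj, Function.update_of_ne hj]
          exact hx0 j
      rw [heq, hBlu] at hx'
      have h10 := (hx' i).2
      rw [Function.update_self, ← hc] at h10
      exact lt_irrefl _ h10
  exact ⟨(l, u), ⟨fun i => (hkey i).1, fun i => (hkey i).2⟩, hBlu.symm⟩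


lemma Rbox_key (nv b b' : Fin d → ℕ) (hb : Good nv b)
    (hsub : Rbox nv b ⊆ Rbox nv b') (j : Fin d) : b' j ≤ b j := by
  have hw : (fun j' => (b j' : ℝ) + 1/2) ∈ Rbox nv b := by
    intro j'
    constructor
    · linarith [le_refl (b j' : ℝ)]
    · have h1 := a_lt_nv nv b hb j'
      have h2 := ub_ge nv b hb j'
      linarith
  have h0 := (hsub hw j).1
  have h3 : (b' j : ℝ) < (b j : ℝ) + 1 := by linarith
  have h4 : b' j < b j + 1 := by exact_mod_cast h3
  omega

lemma Rbox_inj (nv a a' : Fin d → ℕ) (ha : Good nv a) (ha' : Good nv a')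
    (h : Rbox nv a = Rbox nv a') : a = a' := by
  funext j
  have h1 := Rbox_key nv a a' ha h.subset j
  have h2 := Rbox_key nv a' a ha' h.symm.subset j
  omega

end Stmt19

/-- For `n = Σ n_i` with each `n_i ≥ 2`, there are `n` points in `ℝ^d` with at
least `∏ (n_i - 1)` maximal empty open axis-parallel boxes. -/
theorem stmt_19 (d : ℕ) (hd : 2 ≤ d) (nv : Fin d → ℕ) (hnv : ∀ i, 2 ≤ nv i) :
    ∃ S : Finset (Fin d → ℝ), S.card = ∑ i, nv i ∧
      ∏ i, (nv i - 1) ≤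
        {B : Set (Fin d → ℝ) | IsOpenBox B ∧ (B ∩ ↑S = ∅) ∧
          ∀ B' : Set (Fin d → ℝ), IsOpenBox B' → (B' ∩ ↑S = ∅) → B ⊆ B' →
            B' = B}.ncard := by
  haveI : NeZero d := ⟨by omega⟩
  refine ⟨Stmt19.ptS nv, Stmt19.card_ptS hd nv, ?_⟩
  set M := {B : Set (Fin d → ℝ) | IsOpenBox B ∧ (B ∩ ↑(Stmt19.ptS nv) = ∅) ∧
      ∀ B' : Set (Fin d → ℝ), IsOpenBox B' → (B' ∩ ↑(Stmt19.ptS nv) = ∅) → B ⊆ B' →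
        B' = B} with hM
  have hGood : ∀ b : (∀ i : Fin d, Fin (nv i - 1)), Stmt19.Good nv (fun i => (b i : ℕ) + 1) := by
    intro b i
    have h1 := (b i).2
    have h2 := hnv i
    dsimp only
    omega
  have hGood1 : Stmt19.Good nv (fun _ => 1) := by
    intro i
    have h2 := hnv i
    dsimp only
    omega
  have hmem : ∀ b : (∀ i : Fin d, Fin (nv i - 1)),
      Stmt19.Rbox nv (fun i => (b i : ℕ) + 1) ∈ M := by
    intro b
    exact ⟨Stmt19.Rbox_isOpenBox nv _, Stmt19.Rbox_empty hd nv _ (hGood b),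
      fun B' h1 h2 h3 => Stmt19.Rbox_maximal hd nv _ (hGood b) B' h1 h2 h3⟩
  have hfinM : M.Finite := Stmt19.finite_maxboxes (Stmt19.ptS nv)
    ⟨Stmt19.Rbox nv (fun _ => 1), Stmt19.Rbox_isOpenBox nv _,
     Stmt19.Rbox_empty hd nv _ hGood1, ⟨_, Stmt19.center_mem nv _ hGood1⟩⟩
  haveI : Finite ↥M := hfinM.to_subtype
  have hinj : Function.Injective
      (fun b : (∀ i : Fin d, Fin (nv i - 1)) =>
        (⟨Stmt19.Rbox nv (fun i => (b i : ℕ) + 1), hmem b⟩ : M)) := by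
    intro b b' hbb
    rw [Subtype.mk.injEq] at hbb
    have h1 := Stmt19.Rbox_inj nv _ _ (hGood b) (hGood b') hbb
    funext i
    have h2 := congrFun h1 i
    exact Fin.ext (by omega)
  have hcard : Nat.card (∀ i : Fin d, Fin (nv i - 1)) ≤ Nat.card ↥M :=
    Nat.card_le_card_of_injective _ hinj
  calc ∏ i, (nv i - 1) = Nat.card (∀ i : Fin d, Fin (nv i - 1)) := by
        simp [Nat.card_eq_fintype_card, Fintype.card_pi]
    _ ≤ Nat.card ↥M := hcard
    _ = M.ncard := Nat.card_coe_set_eq M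
end
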